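/- arXiv:1402.6250 — 5 statements merged into one kernel-verified Lean document; each statement's English description precedes it below -/
import Mathlib

section
/- Let C be a crystal framework in ℝ^d, let ω ∈ 𝕋^d and let b : V₀ → ℂ^d. Then the ω-phase-periodic velocity field u = b ⊗ e_ω (i.e. u(v,k) = ω^k b(v)) is an infinitesimal flex of C if and only if Φ_C(ω̄) b = 0, where ω̄ is the coordinatewise complex conjugate of ω and b is regarded as a vector in ℂ^{d|V₀|} via the column indexing of Φ_C. -/
open Filter

noncomputable section

/-- The multi-power `z^k = z₁^{k₁} ⋯ z_d^{k_d}` for `z ∈ ℂ^d`, `k ∈ ℤ^d`. -/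
def zpowVec {d : ℕ} (z : Fin d → ℂ) (k : Fin d → ℤ) : ℂ := ∏ j, z j ^ (k j)

/-- Membership in the `d`-torus `𝕋^d`. -/
def OnTorus {d : ℕ} (z : Fin d → ℂ) : Prop := ∀ j, ‖z j‖ = 1

/-- A crystal framework in `ℝ^d`: a finite motif of vertices `V` placed by `p`,
a full-rank translation lattice generated by `a₁, …, a_d`, and a finite set of
motif edges `E` with endpoints `fst e = (v, l)` and `snd e = (w, m)` standing for
the joints `p(v, l)` and `p(w, m)`.  Joints are pairwise distinct and edge vectors
are nonzero. -/
structure CrystalFramework (d : ℕ) where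
  V : Type
  fintypeV : Fintype V
  decV : DecidableEq V
  E : Type
  fintypeE : Fintype E
  p : V → Fin d → ℝ
  a : Fin d → Fin d → ℝ
  indep : LinearIndependent ℝ a
  fst : E → V × (Fin d → ℤ)
  snd : E → V × (Fin d → ℤ)
  joint_injective : Function.Injective
    (fun vk : V × (Fin d → ℤ) =>
      (fun i => p vk.1 i + ∑ j, (vk.2 j : ℝ) * a j i : Fin d → ℝ))
  edge_nonzero : ∀ e : E,
    (fun i => p (fst e).1 i + ∑ j, ((fst e).2 j : ℝ) * a j i : Fin d → ℝ) ≠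
    (fun i => p (snd e).1 i + ∑ j, ((snd e).2 j : ℝ) * a j i)

attribute [instance] CrystalFramework.fintypeV CrystalFramework.decV CrystalFramework.fintypeE

namespace CrystalFramework

variable {d : ℕ} (C : CrystalFramework d)

/-- The joint `p(v, k) = p(v) + k₁a₁ + ⋯ + k_d a_d`. -/
def joint (v : C.V) (k : Fin d → ℤ) : Fin d → ℝ :=
  fun i => C.p v i + ∑ j, (k j : ℝ) * C.a j i

/-- The edge vector `p(e) = p(v, l) - p(w, m)` for the motif edge `e = ((v,l),(w,m))`. -/
def edgeVec (e : C.E) : Fin d → ℝ :=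
  fun i => C.joint (C.fst e).1 (C.fst e).2 i - C.joint (C.snd e).1 (C.snd e).2 i

/-- A complex velocity field `u` is an infinitesimal flex:
`p(e) ⋅ (u(v, l+k) - u(w, m+k)) = 0` for every motif edge and every `k ∈ ℤ^d`. -/
def IsFlex (u : C.V × (Fin d → ℤ) → Fin d → ℂ) : Prop :=
  ∀ (e : C.E) (k : Fin d → ℤ),
    ∑ i, (C.edgeVec e i : ℂ) *
      (u ((C.fst e).1, fun j => (C.fst e).2 j + k j) i -
       u ((C.snd e).1, fun j => (C.snd e).2 j + k j) i) = 0

/-- A real velocity field `u` is an infinitesimal flex. -/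
def IsRealFlex (u : C.V × (Fin d → ℤ) → Fin d → ℝ) : Prop :=
  ∀ (e : C.E) (k : Fin d → ℤ),
    ∑ i, C.edgeVec e i *
      (u ((C.fst e).1, fun j => (C.fst e).2 j + k j) i -
       u ((C.snd e).1, fun j => (C.snd e).2 j + k j) i) = 0

/-- A complex velocity field is trivial if the flex condition holds for every pair of joints. -/
def IsTrivial (u : C.V × (Fin d → ℤ) → Fin d → ℂ) : Prop :=
  ∀ (v w : C.V) (k k' : Fin d → ℤ),
    ∑ i, ((C.joint v k i - C.joint w k' i : ℝ) : ℂ) * (u (v, k) i - u (w, k') i) = 0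

/-- A real velocity field is trivial if the flex condition holds for every pair of joints. -/
def IsRealTrivial (u : C.V × (Fin d → ℤ) → Fin d → ℝ) : Prop :=
  ∀ (v w : C.V) (k k' : Fin d → ℤ),
    ∑ i, (C.joint v k i - C.joint w k' i) * (u (v, k) i - u (w, k') i) = 0

/-- A complex velocity field is strictly periodic if `u(v,k) = u(v,0)`. -/
def StrictlyPeriodic (u : C.V × (Fin d → ℤ) → Fin d → ℂ) : Prop :=
  ∀ (v : C.V) (k : Fin d → ℤ), u (v, k) = u (v, 0)

/-- A real velocity field is strictly periodic if `u(v,k) = u(v,0)`. -/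
def StrictlyPeriodicReal (u : C.V × (Fin d → ℤ) → Fin d → ℝ) : Prop :=
  ∀ (v : C.V) (k : Fin d → ℤ), u (v, k) = u (v, 0)

/-- The `ω`-phase-periodic velocity field `b ⊗ e_ω : (v,k) ↦ ω^k b(v)`. -/
def phaseField (ω : Fin d → ℂ) (b : C.V → Fin d → ℂ) :
    C.V × (Fin d → ℤ) → Fin d → ℂ :=
  fun vk i => zpowVec ω vk.2 * b vk.1 i

/-- The symbol function `Φ_C(z)`: the row of the motif edge `e = ((v,l),(w,m))` has
entries `z̄^l p(e)` in the columns of `v` and `-z̄^m p(e)` in the columns of `w`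
(in particular entries `(z̄^l - z̄^m) p(e)` in the columns of `v` when `v = w`). -/
def symbol (z : Fin d → ℂ) : Matrix C.E (C.V × Fin d) ℂ :=
  Matrix.of fun e xi =>
    (C.edgeVec e xi.2 : ℂ) *
      ((if xi.1 = (C.fst e).1 then
          zpowVec (fun j => (starRingEnd ℂ) (z j)) (C.fst e).2 else 0) -
       (if xi.1 = (C.snd e).1 then
          zpowVec (fun j => (starRingEnd ℂ) (z j)) (C.snd e).2 else 0))

/-- The RUM spectrum `Ω(C)`: the set of `ω ∈ 𝕋^d` admitting a nonzero
`ω`-phase-periodic infinitesimal flex. -/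
def RUM : Set (Fin d → ℂ) :=
  {ω | OnTorus ω ∧ ∃ b : C.V → Fin d → ℂ, b ≠ 0 ∧ C.IsFlex (C.phaseField ω b)}

end CrystalFramework


/-- The `ω`-phase-periodic velocity field `u = b ⊗ e_ω` is an
infinitesimal flex of the crystal framework `C` if and only if `Φ_C(ω̄) b = 0`. -/
theorem phasePeriodic_isFlex_iff_symbol_mulVec_eq_zero
    {d : ℕ} (C : CrystalFramework d) (ω : Fin d → ℂ) (hω : OnTorus ω)
    (b : C.V → Fin d → ℂ) :
    C.IsFlex (C.phaseField ω b) ↔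
      (C.symbol fun j => (starRingEnd ℂ) (ω j)).mulVec (fun xi => b xi.1 xi.2) = 0 := by
  classical
  have hnz : ∀ j, ω j ≠ 0 := by
    intro j h; simpa [h] using hω j
  have hzne : ∀ k : Fin d → ℤ, zpowVec ω k ≠ 0 := by
    intro k
    exact Finset.prod_ne_zero_iff.2 fun j _ => zpow_ne_zero _ (hnz j)
  have hzadd : ∀ l k : Fin d → ℤ,
      zpowVec ω (fun j => l j + k j) = zpowVec ω l * zpowVec ω k := by
    intro l k
    simp only [zpowVec, ← Finset.prod_mul_distrib]
    exact Finset.prod_congr rfl fun j _ => zpow_add₀ (hnz j) _ _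
  have key : ∀ e, (C.symbol fun j => (starRingEnd ℂ) (ω j)).mulVec
      (fun xi => b xi.1 xi.2) e =
      ∑ i, (C.edgeVec e i : ℂ) *
        (zpowVec ω (C.fst e).2 * b (C.fst e).1 i -
         zpowVec ω (C.snd e).2 * b (C.snd e).1 i) := by
    intro e
    simp only [Matrix.mulVec, dotProduct, CrystalFramework.symbol,
      Matrix.of_apply, Complex.conj_conj, Fintype.sum_prod_type]
    rw [Finset.sum_comm]
    refine Finset.sum_congr rfl fun i _ => ?_
    simp only [sub_mul, ite_mul, zero_mul, mul_assoc, ← Finset.mul_sum, mul_sub,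
      Finset.sum_sub_distrib, Finset.sum_ite_eq', Finset.mem_univ, if_true]
  have hflex : ∀ e (k : Fin d → ℤ),
      (∑ i, (C.edgeVec e i : ℂ) *
        (C.phaseField ω b ((C.fst e).1, fun j => (C.fst e).2 j + k j) i -
         C.phaseField ω b ((C.snd e).1, fun j => (C.snd e).2 j + k j) i)) =
      zpowVec ω k *
        ∑ i, (C.edgeVec e i : ℂ) *
          (zpowVec ω (C.fst e).2 * b (C.fst e).1 i -
           zpowVec ω (C.snd e).2 * b (C.snd e).1 i) := by
    intro e k
    simp only [CrystalFramework.phaseField, hzadd, Finset.mul_sum]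
    exact Finset.sum_congr rfl fun i _ => by ring
  constructor
  · intro h
    funext e
    have h0 := h e 0
    rw [hflex] at h0
    have := (mul_eq_zero.1 h0).resolve_left (hzne 0)
    rw [key, this, Pi.zero_apply]
  · intro h e k
    rw [hflex]
    have := congrFun h e
    rw [key] at this
    rw [this]; simp
end
end

section
/- Let C be a crystal framework in ℝ^d. The following are equivalent: (i) every strictly periodic real infinitesimal flex of C (a flex u : V₀ × ℤ^d → ℝ^d with u(v,k) = u(v,0) for all v,k) is trivial; (ii) every strictly periodic complex infinitesimal flex of C is trivial; (iii) the rank of the matrix Φ_C(1,…,1) equals d|V₀| − d. -/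
open Filter

noncomputable section

noncomputable section AuxProof

lemma orth_zero' {d : ℕ} {a : Fin d → Fin d → ℝ} (ha : LinearIndependent ℝ a)
    (x : Fin d → ℝ) (hx : ∀ j, ∑ i, a j i * x i = 0) : x = 0 := by
  have hcard : Fintype.card (Fin d) = Module.finrank ℝ (Fin d → ℝ) := by simp
  rcases Nat.eq_zero_or_pos d with hd | hd
  · subst hd; funext i; exact absurd i.2 (by omega)
  have : Nonempty (Fin d) := ⟨⟨0, hd⟩⟩
  set B := basisOfLinearIndependentOfCardEqFinrank ha hcard with hB
  have hBc : ∀ j, B j = a j := fun j =>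
    congrFun (coe_basisOfLinearIndependentOfCardEqFinrank ha hcard) j
  have hx' : ∀ i, x i = ∑ j, B.repr x j * a j i := by
    intro i
    conv_lhs => rw [← B.sum_repr x]
    simp [hBc]
  have hsq : ∑ i, x i * x i = 0 := by
    calc ∑ i, x i * x i = ∑ i, ∑ j, B.repr x j * a j i * x i := by
          refine Finset.sum_congr rfl fun i _ => ?_
          rw [← Finset.sum_mul, ← hx' i]
      _ = ∑ j, B.repr x j * ∑ i, a j i * x i := by
          rw [Finset.sum_comm]
          exact Finset.sum_congr rfl fun j _ => by
            rw [Finset.mul_sum]; exact Finset.sum_congr rfl fun i _ => by ring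
      _ = 0 := Finset.sum_eq_zero fun j _ => by rw [hx j, mul_zero]
  funext i
  exact mul_self_eq_zero.mp
    ((Finset.sum_eq_zero_iff_of_nonneg (fun i _ => mul_self_nonneg (x i))).mp hsq i
      (Finset.mem_univ i))

namespace CrystalFramework
variable {d : ℕ} (C : CrystalFramework d)

lemma symbol_one_mulVec (x : C.V × Fin d → ℂ) (e : C.E) :
    (C.symbol fun _ => 1).mulVec x e
      = ∑ i, (C.edgeVec e i : ℂ) * (x ((C.fst e).1, i) - x ((C.snd e).1, i)) := by
  simp only [Matrix.mulVec, dotProduct, symbol, Matrix.of_apply]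
  rw [Fintype.sum_prod_type, Finset.sum_comm]
  refine Finset.sum_congr rfl fun i _ => ?_
  simp only [map_one, zpowVec, one_zpow, Finset.prod_const_one, mul_one,
    mul_sub, sub_mul, ite_mul, zero_mul, one_mul, mul_ite, mul_zero, Finset.sum_sub_distrib,
    Finset.sum_ite_eq', Finset.mem_univ, if_true]

/-- The complex periodic-kernel condition. -/
def PFlexC : Prop :=
  ∀ b : C.V → Fin d → ℂ,
    (∀ e : C.E, ∑ i, (C.edgeVec e i : ℂ) * (b (C.fst e).1 i - b (C.snd e).1 i) = 0) →
    ∀ v w : C.V, b v = b w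

/-- The real periodic-kernel condition. -/
def PFlexR : Prop :=
  ∀ b : C.V → Fin d → ℝ,
    (∀ e : C.E, ∑ i, C.edgeVec e i * (b (C.fst e).1 i - b (C.snd e).1 i) = 0) →
    ∀ v w : C.V, b v = b w

lemma joint_single_sub (v : C.V) (j : Fin d) (i : Fin d) :
    C.joint v (Pi.single j 1) i - C.joint v 0 i = C.a j i := by
  simp [joint, Pi.single_apply, ite_mul, Finset.sum_ite_eq', apply_ite (fun z : ℤ => (z : ℝ))]

lemma complex_iff_PFlexC :
    (∀ u : C.V × (Fin d → ℤ) → Fin d → ℂ,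
        C.IsFlex u → C.StrictlyPeriodic u → C.IsTrivial u) ↔ C.PFlexC := by
  constructor
  · intro h b hb v w
    set u : C.V × (Fin d → ℤ) → Fin d → ℂ := fun vk i => b vk.1 i with hu
    have hflex : C.IsFlex u := fun e k => hb e
    have hper : C.StrictlyPeriodic u := fun v k => rfl
    have ht := h u hflex hper
    set c : Fin d → ℂ := fun i => b v i - b w i with hc
    have hlin : ∀ j, ∑ i, (C.a j i : ℂ) * c i = 0 := by
      intro j
      have h1 := ht v w (Pi.single j 1) 0
      have h2 := ht v w 0 0
      have h3 : ∑ i, ((C.joint v (Pi.single j 1) i - C.joint w 0 i : ℝ) : ℂ) * c i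
          - ∑ i, ((C.joint v 0 i - C.joint w 0 i : ℝ) : ℂ) * c i
          = ∑ i, (C.a j i : ℂ) * c i := by
        rw [← Finset.sum_sub_distrib]
        refine Finset.sum_congr rfl fun i _ => ?_
        rw [← sub_mul, ← Complex.ofReal_sub]
        congr 2
        rw [← C.joint_single_sub v j i]; ring
      rw [← h3, h1, h2, sub_zero]
    have hre : (fun i => (c i).re) = 0 := by
      refine orth_zero' C.indep _ fun j => ?_
      have := congrArg Complex.re (hlin j)
      simpa [Complex.re_sum, Complex.re_ofReal_mul] using this
    have him : (fun i => (c i).im) = 0 := by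
      refine orth_zero' C.indep _ fun j => ?_
      have := congrArg Complex.im (hlin j)
      simpa [Complex.im_sum, Complex.im_ofReal_mul] using this
    funext i
    have h0 : c i = 0 := Complex.ext (congrFun hre i) (congrFun him i)
    have := sub_eq_zero.mp h0
    exact this
  · intro h u hf hp v w k k'
    set b : C.V → Fin d → ℂ := fun v i => u (v, 0) i with hbdef
    have hb : ∀ e : C.E,
        ∑ i, (C.edgeVec e i : ℂ) * (b (C.fst e).1 i - b (C.snd e).1 i) = 0 := by
      intro e
      have := hf e 0
      rw [hp (C.fst e).1, hp (C.snd e).1] at this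
      exact this
    have hvw := h b hb
    have h1 : u (v, k) = b v := hp v k
    have h2 : u (w, k') = b w := hp w k'
    rw [h1, h2, hvw v w]
    simp

lemma real_iff_PFlexR :
    (∀ u : C.V × (Fin d → ℤ) → Fin d → ℝ,
        C.IsRealFlex u → C.StrictlyPeriodicReal u → C.IsRealTrivial u) ↔ C.PFlexR := by
  constructor
  · intro h b hb v w
    set u : C.V × (Fin d → ℤ) → Fin d → ℝ := fun vk i => b vk.1 i with hu
    have hflex : C.IsRealFlex u := fun e k => hb e
    have hper : C.StrictlyPeriodicReal u := fun v k => rfl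
    have ht := h u hflex hper
    set c : Fin d → ℝ := fun i => b v i - b w i with hc
    have hlin : ∀ j, ∑ i, C.a j i * c i = 0 := by
      intro j
      have h1 := ht v w (Pi.single j 1) 0
      have h2 := ht v w 0 0
      have h3 : ∑ i, (C.joint v (Pi.single j 1) i - C.joint w 0 i) * c i
          - ∑ i, (C.joint v 0 i - C.joint w 0 i) * c i
          = ∑ i, C.a j i * c i := by
        rw [← Finset.sum_sub_distrib]
        refine Finset.sum_congr rfl fun i _ => ?_
        rw [← sub_mul]
        congr 1
        rw [← C.joint_single_sub v j i]; ring
      rw [← h3, h1, h2, sub_zero]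
    have hre : c = 0 := orth_zero' C.indep _ hlin
    funext i
    exact sub_eq_zero.mp (congrFun hre i)
  · intro h u hf hp v w k k'
    set b : C.V → Fin d → ℝ := fun v i => u (v, 0) i with hbdef
    have hb : ∀ e : C.E,
        ∑ i, C.edgeVec e i * (b (C.fst e).1 i - b (C.snd e).1 i) = 0 := by
      intro e
      have := hf e 0
      rw [hp (C.fst e).1, hp (C.snd e).1] at this
      exact this
    have hvw := h b hb
    have h1 : u (v, k) = b v := hp v k
    have h2 : u (w, k') = b w := hp w k'
    rw [h1, h2, hvw v w]
    simp

lemma PFlexR_iff_PFlexC : C.PFlexR ↔ C.PFlexC := by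
  constructor
  · intro h b hb v w
    have hre := h (fun v i => (b v i).re) (fun e => by
      have := congrArg Complex.re (hb e)
      simpa [Complex.re_sum, Complex.re_ofReal_mul] using this) v w
    have him := h (fun v i => (b v i).im) (fun e => by
      have := congrArg Complex.im (hb e)
      simpa [Complex.im_sum, Complex.im_ofReal_mul] using this) v w
    funext i
    exact Complex.ext (congrFun hre i) (congrFun him i)
  · intro h b hb v w
    have hc := h (fun v i => ((b v i : ℝ) : ℂ)) (fun e => by
      show ∑ i, (C.edgeVec e i : ℂ) *
        (((b (C.fst e).1 i : ℝ) : ℂ) - ((b (C.snd e).1 i : ℝ) : ℂ)) = 0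
      exact_mod_cast hb e) v w
    funext i
    exact_mod_cast congrFun hc i

/-- Constant-extension linear map. -/
def constMap : (Fin d → ℂ) →ₗ[ℂ] (C.V × Fin d → ℂ) where
  toFun c := fun vi => c vi.2
  map_add' _ _ := rfl
  map_smul' _ _ := rfl

lemma PFlexC_iff_rank :
    C.PFlexC ↔ (C.symbol fun _ => 1).rank = d * Fintype.card C.V - d := by
  set M := C.symbol fun _ => 1 with hM
  set L := M.mulVecLin with hL
  have hLapp : ∀ (x : C.V × Fin d → ℂ) (e : C.E),
      L x e = ∑ i, (C.edgeVec e i : ℂ) * (x ((C.fst e).1, i) - x ((C.snd e).1, i)) := by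
    intro x e
    rw [hL, Matrix.mulVecLin_apply, C.symbol_one_mulVec]
  rcases isEmpty_or_nonempty C.V with hV | hV
  · have hP : C.PFlexC := fun b hb v => (hV.false v).elim
    have hr : M.rank = 0 := by
      have := Matrix.rank_le_card_width M
      simp [Fintype.card_prod, Fintype.card_eq_zero] at this
      omega
    have hcard : Fintype.card C.V = 0 := Fintype.card_eq_zero
    simp [hP, hr, hcard]
  · obtain ⟨v₀⟩ := hV
    have hrank : M.rank = Module.finrank ℂ (LinearMap.range L) := rfl
    set K := LinearMap.range (C.constMap) with hK
    have hKker : K ≤ LinearMap.ker L := by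
      rintro x ⟨c, rfl⟩
      rw [LinearMap.mem_ker]
      funext e
      rw [hLapp]
      exact Finset.sum_eq_zero fun i _ => by simp [constMap]
    have hKinj : Function.Injective (C.constMap) := by
      intro c c' hcc
      funext i
      exact congrFun hcc (v₀, i)
    have hKd : Module.finrank ℂ K = d := by
      rw [hK, LinearMap.finrank_range_of_inj hKinj]
      simp
    have hRN : Module.finrank ℂ (LinearMap.range L) + Module.finrank ℂ (LinearMap.ker L)
        = Fintype.card C.V * d := by
      rw [LinearMap.finrank_range_add_finrank_ker]
      simp [Fintype.card_prod]
    have hker_ge : d ≤ Module.finrank ℂ (LinearMap.ker L) := by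
      have := Submodule.finrank_mono hKker
      omega
    have hcomm : d * Fintype.card C.V = Fintype.card C.V * d := Nat.mul_comm _ _
    constructor
    · intro hP
      have hkerK : LinearMap.ker L = K := by
        refine le_antisymm ?_ hKker
        intro x hx
        have hxz : L x = 0 := LinearMap.mem_ker.mp hx
        have hb : ∀ e : C.E,
            ∑ i, (C.edgeVec e i : ℂ) * ((fun v i => x (v, i)) (C.fst e).1 i
              - (fun v i => x (v, i)) (C.snd e).1 i) = 0 := by
          intro e
          have := congrFun hxz e
          rw [hLapp] at this
          exact this
        have hvw := hP (fun v i => x (v, i)) hb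
        exact ⟨fun i => x (v₀, i), funext fun vi => (congrFun (hvw vi.1 v₀) vi.2).symm⟩
      have hnull : Module.finrank ℂ (LinearMap.ker L) = d := by rw [hkerK, hKd]
      rw [hrank, hcomm]
      omega
    · intro hr
      rw [hcomm] at hr
      have hdA : d ≤ Fintype.card C.V * d := by
        calc d = 1 * d := (one_mul d).symm
          _ ≤ Fintype.card C.V * d := Nat.mul_le_mul_right d (Fintype.card_pos_iff.mpr ⟨v₀⟩)
      have hnull : Module.finrank ℂ (LinearMap.ker L) = d := by
        rw [hrank] at hr
        omega
      have hkerK : K = LinearMap.ker L :=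
        Submodule.eq_of_le_of_finrank_eq hKker (by rw [hKd, hnull])
      intro b hb
      set x : C.V × Fin d → ℂ := fun vi => b vi.1 vi.2 with hx
      have hxker : x ∈ LinearMap.ker L := by
        rw [LinearMap.mem_ker]
        funext e
        rw [hLapp]
        exact hb e
      rw [← hkerK] at hxker
      obtain ⟨c, hc⟩ := hxker
      intro v w
      funext i
      have h1 : b v i = c i := (congrFun hc (v, i)).symm
      have h2 : b w i = c i := (congrFun hc (w, i)).symm
      rw [h1, h2]

end CrystalFramework
end AuxProof


/-- For a crystal framework `C` in `ℝ^d` the following are equivalent: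
(i) every strictly periodic real infinitesimal flex is trivial;
(ii) every strictly periodic complex infinitesimal flex is trivial;
(iii) `rank Φ_C(1,…,1) = d|V₀| - d`. -/
theorem strictlyPeriodic_rigidity_tfae {d : ℕ} (C : CrystalFramework d) :
    ((∀ u : C.V × (Fin d → ℤ) → Fin d → ℝ,
        C.IsRealFlex u → C.StrictlyPeriodicReal u → C.IsRealTrivial u) ↔
      (∀ u : C.V × (Fin d → ℤ) → Fin d → ℂ,
        C.IsFlex u → C.StrictlyPeriodic u → C.IsTrivial u)) ∧
    ((∀ u : C.V × (Fin d → ℤ) → Fin d → ℂ,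
        C.IsFlex u → C.StrictlyPeriodic u → C.IsTrivial u) ↔
      (C.symbol fun _ => 1).rank = d * Fintype.card C.V - d) := by
  constructor
  · exact (C.real_iff_PFlexR).trans ((C.PFlexR_iff_PFlexC).trans (C.complex_iff_PFlexC).symm)
  · exact (C.complex_iff_PFlexC).trans C.PFlexC_iff_rank
end
end

section
/- (Parseval inequality) Let h : ℤ^d → ℂ^r be almost periodic and let ω₁,…,ω_n be distinct points of 𝕋^d. Then Σ_{i=1}^n ‖[h, e_{ω_i}]‖² ≤ [h,h], where [h, e_{ω_i}] ∈ ℂ^r is the mean pairing of h against the scalar sequence e_{ω_i} and [h,h] = lim_{N→∞} (2N+1)^{−d} Σ_{|k_j| ≤ N} ‖h(k)‖². -/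
open Filter

noncomputable section

/-- The box `{k ∈ ℤ^d : |k_j| ≤ N for all j}`. -/
def box (d : ℕ) (N : ℕ) : Finset (Fin d → ℤ) :=
  Fintype.piFinset fun _ => Finset.Icc (-(N : ℤ)) (N : ℤ)

/-- The average `(2N+1)^{-d} ∑_{|k_j| ≤ N} f(k)`. -/
def boxAvg {d : ℕ} (f : (Fin d → ℤ) → ℂ) (N : ℕ) : ℂ :=
  (((2 * N + 1 : ℕ) : ℂ) ^ d)⁻¹ * ∑ k ∈ box d N, f k

/-- `f : ℤ^d → ℂ` has mean value `L`. -/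
def HasMean {d : ℕ} (f : (Fin d → ℤ) → ℂ) (L : ℂ) : Prop :=
  Tendsto (boxAvg f) atTop (nhds L)

/-- The mean pairing `[h, g] = lim_N (2N+1)^{-d} ∑_{|k_j| ≤ N} h(k) ⬝ conj (g(k))`,
computed componentwise, has value `L`. -/
def HasMeanPairing {d : ℕ} {ι : Type} [Fintype ι]
    (h : (Fin d → ℤ) → ι → ℂ) (g : (Fin d → ℤ) → ℂ) (L : ι → ℂ) : Prop :=
  ∀ i, HasMean (fun k => h k i * (starRingEnd ℂ) (g k)) (L i)

/-- The pure frequency sequence `e_ω(k) = ω^k`. -/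
def eOmega {d : ℕ} (ω : Fin d → ℂ) : (Fin d → ℤ) → ℂ := fun k => zpowVec ω k

/-- Bohr almost periodicity for a bounded `h : ℤ^d → ℂ^ι`: for every `ε > 0`
there is `R > 0` such that every closed Euclidean ball of radius `R` in `ℝ^d`
contains an `ε`-translation vector `l` of `h`, i.e. `‖R_l h - h‖_∞ < ε`. -/
def IsBohrAP {d : ℕ} {ι : Type} [Fintype ι] (h : (Fin d → ℤ) → ι → ℂ) : Prop :=
  (∃ M : ℝ, ∀ k i, ‖h k i‖ ≤ M) ∧
  ∀ ε > (0 : ℝ), ∃ R > (0 : ℝ), ∀ c : Fin d → ℝ, ∃ l : Fin d → ℤ,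
    Real.sqrt (∑ j, ((l j : ℝ) - c j) ^ 2) ≤ R ∧
    ∀ k i, ‖h (fun j => k j - l j) i - h k i‖ < ε



section Helpers

variable {d : ℕ}

lemma boxAvg_eq_sum (f : (Fin d → ℤ) → ℂ) (N : ℕ) :
    boxAvg f N = ∑ k ∈ box d N, (((2 * N + 1 : ℕ) : ℂ) ^ d)⁻¹ * f k := by
  simp [boxAvg, Finset.mul_sum]

lemma hm_add {f g : (Fin d → ℤ) → ℂ} {Lf Lg : ℂ} (hf : HasMean f Lf) (hg : HasMean g Lg) :
    HasMean (fun k => f k + g k) (Lf + Lg) := by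
  have e : boxAvg (fun k => f k + g k) = fun N => boxAvg f N + boxAvg g N := by
    funext N; simp [boxAvg, Finset.sum_add_distrib, mul_add]
  unfold HasMean at *; rw [e]; exact hf.add hg

lemma hm_neg {f : (Fin d → ℤ) → ℂ} {Lf : ℂ} (hf : HasMean f Lf) :
    HasMean (fun k => -f k) (-Lf) := by
  have e : boxAvg (fun k => -f k) = fun N => -boxAvg f N := by
    funext N; simp [boxAvg, Finset.sum_neg_distrib]
  unfold HasMean at *; rw [e]; exact hf.neg

lemma hm_sub {f g : (Fin d → ℤ) → ℂ} {Lf Lg : ℂ} (hf : HasMean f Lf) (hg : HasMean g Lg) :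
    HasMean (fun k => f k - g k) (Lf - Lg) := by
  simpa [sub_eq_add_neg] using hm_add hf (hm_neg hg)

lemma hm_const_mul {f : (Fin d → ℤ) → ℂ} {Lf : ℂ} (c : ℂ) (hf : HasMean f Lf) :
    HasMean (fun k => c * f k) (c * Lf) := by
  have e : boxAvg (fun k => c * f k) = fun N => c * boxAvg f N := by
    funext N; simp only [boxAvg, ← Finset.mul_sum]; ring
  unfold HasMean at *; rw [e]; exact hf.const_mul c

lemma hm_sum {ι : Type*} (s : Finset ι) (f : ι → (Fin d → ℤ) → ℂ) (L : ι → ℂ)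
    (hf : ∀ i ∈ s, HasMean (f i) (L i)) :
    HasMean (fun k => ∑ i ∈ s, f i k) (∑ i ∈ s, L i) := by
  have e : boxAvg (fun k => ∑ i ∈ s, f i k) = fun N => ∑ i ∈ s, boxAvg (f i) N := by
    funext N
    simp only [boxAvg, ← Finset.mul_sum]
    rw [Finset.sum_comm]
  unfold HasMean at *; rw [e]; exact tendsto_finset_sum s hf

lemma hm_conj {f : (Fin d → ℤ) → ℂ} {Lf : ℂ} (hf : HasMean f Lf) :
    HasMean (fun k => (starRingEnd ℂ) (f k)) ((starRingEnd ℂ) Lf) := by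
  have e : boxAvg (fun k => (starRingEnd ℂ) (f k)) = fun N => (starRingEnd ℂ) (boxAvg f N) := by
    funext N
    simp only [boxAvg, map_mul, map_sum, map_inv₀, map_pow, map_natCast]
  unfold HasMean at *; rw [e]
  exact (Complex.continuous_conj.tendsto Lf).comp hf

lemma sum_zpow_Icc (z : ℂ) (hz : z ≠ 0) (N : ℕ) :
    ∑ m ∈ Finset.Icc (-(N : ℤ)) (N : ℤ), z ^ m
      = z ^ (-(N : ℤ)) * ∑ i ∈ Finset.range (2 * N + 1), z ^ i := by
  have hmap : Finset.Icc (-(N : ℤ)) (N : ℤ)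
      = Finset.map ⟨fun (i : ℕ) => (i : ℤ) - N, fun a b hab => by
          simp only [sub_left_inj, Nat.cast_inj] at hab; exact hab⟩
          (Finset.range (2 * N + 1)) := by
    ext m
    simp only [Finset.mem_Icc, Finset.mem_map, Finset.mem_range,
      Function.Embedding.coeFn_mk]
    constructor
    · intro hm; exact ⟨(m + N).toNat, by omega, by show ((m + N).toNat : ℤ) - N = m; omega⟩
    · rintro ⟨i, hi, rfl⟩; show -(N:ℤ) ≤ (i:ℤ) - N ∧ (i:ℤ) - N ≤ N; omega
  rw [hmap, Finset.sum_map, Finset.mul_sum]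
  refine Finset.sum_congr rfl fun i _ => ?_
  show z ^ ((i:ℤ) - (N:ℤ)) = z ^ (-(N:ℤ)) * z ^ i
  rw [zpow_sub₀ hz, zpow_neg, zpow_natCast, zpow_natCast, div_eq_mul_inv, mul_comm]

lemma abs_sum_zpow_le {z : ℂ} (hz : ‖z‖ = 1) (hz1 : z ≠ 1) (N : ℕ) :
    ‖∑ m ∈ Finset.Icc (-(N : ℤ)) (N : ℤ), z ^ m‖
      ≤ 2 / ‖z - 1‖ := by
  have hz0 : z ≠ 0 := by intro hh; simp [hh] at hz
  rw [sum_zpow_Icc z hz0, norm_mul, norm_zpow, hz, one_zpow, one_mul,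
    geom_sum_eq hz1, norm_div]
  have hden : 0 < ‖z - 1‖ := norm_pos_iff.mpr (sub_ne_zero.mpr hz1)
  gcongr
  have h1 : ‖z ^ (2 * N + 1)‖ = 1 := by rw [norm_pow, hz, one_pow]
  calc ‖z ^ (2 * N + 1) - 1‖
      ≤ ‖z ^ (2 * N + 1)‖ + ‖(1 : ℂ)‖ := norm_sub_le _ _
    _ ≤ 2 := by rw [h1]; norm_num

lemma card_Icc_int (N : ℕ) : (Finset.Icc (-(N : ℤ)) (N : ℤ)).card = 2 * N + 1 := by
  rw [Int.card_Icc]; omega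

lemma boxAvg_zpowVec (z : Fin d → ℂ) (N : ℕ) :
    boxAvg (fun k => zpowVec z k) N
      = ∏ j, (((2 * N + 1 : ℕ) : ℂ))⁻¹ * ∑ m ∈ Finset.Icc (-(N : ℤ)) (N : ℤ), z j ^ m := by
  rw [Finset.prod_mul_distrib, Finset.prod_const, boxAvg]
  congr 1
  · simp [← inv_pow]
  · rw [box]
    simp only [zpowVec]
    rw [Finset.prod_univ_sum]

lemma abs_avg_factor_le_one {z : ℂ} (hz : ‖z‖ = 1) (N : ℕ) :
    ‖(((2 * N + 1 : ℕ) : ℂ))⁻¹ * ∑ m ∈ Finset.Icc (-(N : ℤ)) (N : ℤ), z ^ m‖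
      ≤ 1 := by
  have hsum : ‖∑ m ∈ Finset.Icc (-(N : ℤ)) (N : ℤ), z ^ m‖
      ≤ ((2 * N + 1 : ℕ) : ℝ) := by
    calc ‖∑ m ∈ Finset.Icc (-(N : ℤ)) (N : ℤ), z ^ m‖
        ≤ ∑ m ∈ Finset.Icc (-(N : ℤ)) (N : ℤ), ‖z ^ m‖ :=
          norm_sum_le _ _
      _ = ((2 * N + 1 : ℕ) : ℝ) := by
          simp only [norm_zpow, hz, one_zpow]
          rw [Finset.sum_const, card_Icc_int N]; simp
  rw [norm_mul, norm_inv, Complex.norm_natCast]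
  have hpos : (0 : ℝ) < ((2 * N + 1 : ℕ) : ℝ) := by positivity
  rw [inv_mul_le_iff₀ hpos, mul_one]
  exact hsum

lemma tendsto_inv_two_n_one : Tendsto (fun N : ℕ => (((2 * N + 1 : ℕ) : ℝ))⁻¹) atTop (nhds 0) := by
  apply Tendsto.inv_tendsto_atTop
  apply tendsto_natCast_atTop_atTop.comp
  have h2 : Tendsto (fun N : ℕ => 2 * N + 1) atTop atTop :=
    tendsto_atTop_mono (fun N => by simp only [id_eq]; omega) tendsto_id
  exact tendsto_natCast_atTop_atTop.comp h2

lemma hm_torus_zpowVec {z : Fin d → ℂ} (hz : ∀ j, ‖z j‖ = 1) :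
    HasMean (fun k => zpowVec z k) (if ∀ j, z j = 1 then 1 else 0) := by
  by_cases h1 : ∀ j, z j = 1
  · rw [if_pos h1]
    have e : boxAvg (fun k => zpowVec z (k : Fin d → ℤ)) = fun _ => (1 : ℂ) := by
      funext N
      rw [boxAvg_zpowVec]
      refine Finset.prod_eq_one fun j _ => ?_
      rw [h1 j]
      have h2 : ((2 * N + 1 : ℕ) : ℂ) ≠ 0 := by
        exact_mod_cast Nat.succ_ne_zero (2 * N)
      simp only [one_zpow, Finset.sum_const, card_Icc_int N, nsmul_eq_mul, mul_one]
      exact inv_mul_cancel₀ h2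
    unfold HasMean; rw [e]; exact tendsto_const_nhds
  · rw [if_neg h1]
    push_neg at h1
    obtain ⟨j0, hj0⟩ := h1
    have hden : 0 < ‖z j0 - 1‖ :=
      norm_pos_iff.mpr (sub_ne_zero.mpr hj0)
    unfold HasMean
    refine squeeze_zero_norm (f := boxAvg fun k => zpowVec z k)
      (a := fun N : ℕ => (((2 * N + 1 : ℕ) : ℝ))⁻¹ * (2 / ‖z j0 - 1‖)) ?_ ?_
    · intro N
      rw [boxAvg_zpowVec, norm_prod]
      calc ∏ j, ‖(((2 * N + 1 : ℕ) : ℂ))⁻¹ *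
              ∑ m ∈ Finset.Icc (-(N : ℤ)) (N : ℤ), z j ^ m‖
          = ‖(((2 * N + 1 : ℕ) : ℂ))⁻¹ *
              ∑ m ∈ Finset.Icc (-(N : ℤ)) (N : ℤ), z j0 ^ m‖ *
            ∏ j ∈ Finset.univ.erase j0, ‖(((2 * N + 1 : ℕ) : ℂ))⁻¹ *
              ∑ m ∈ Finset.Icc (-(N : ℤ)) (N : ℤ), z j ^ m‖ :=
            (Finset.mul_prod_erase Finset.univ _ (Finset.mem_univ j0)).symm
        _ ≤ ‖(((2 * N + 1 : ℕ) : ℂ))⁻¹ *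
              ∑ m ∈ Finset.Icc (-(N : ℤ)) (N : ℤ), z j0 ^ m‖ * 1 := by
            apply mul_le_mul_of_nonneg_left ?_ (norm_nonneg _)
            exact Finset.prod_le_one (fun j _ => norm_nonneg _)
              (fun j _ => abs_avg_factor_le_one (hz j) N)
        _ ≤ (((2 * N + 1 : ℕ) : ℝ))⁻¹ * (2 / ‖z j0 - 1‖) := by
            rw [mul_one, norm_mul, norm_inv, Complex.norm_natCast]
            exact mul_le_mul_of_nonneg_left (abs_sum_zpow_le (hz j0) hj0 N)
              (by positivity)
    · simpa using tendsto_inv_two_n_one.mul_const (2 / ‖z j0 - 1‖)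

lemma hm_eOmega_pair {ω ω' : Fin d → ℂ} (hω : OnTorus ω) (hω' : OnTorus ω') :
    HasMean (fun k => eOmega ω k * (starRingEnd ℂ) (eOmega ω' k))
      (if ω = ω' then 1 else 0) := by
  have hfun : (fun k => eOmega ω k * (starRingEnd ℂ) (eOmega ω' k))
      = fun k => zpowVec (fun j => ω j * (starRingEnd ℂ) (ω' j)) k := by
    funext k
    simp only [eOmega, zpowVec, map_prod, map_zpow₀, ← Finset.prod_mul_distrib, mul_zpow]
  have habs : ∀ j, ‖ω j * (starRingEnd ℂ) (ω' j)‖ = 1 := by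
    intro j; rw [norm_mul, Complex.norm_conj, hω j, hω' j, mul_one]
  have hcond : (∀ j, ω j * (starRingEnd ℂ) (ω' j) = 1) ↔ ω = ω' := by
    constructor
    · intro hh
      funext j
      have h0 : ω' j ≠ 0 := by
        intro hz; have := hω' j; rw [hz] at this; simp at this
      have hinv : (starRingEnd ℂ) (ω' j) = (ω' j)⁻¹ := by
        rw [Complex.inv_def]
        have : Complex.normSq (ω' j) = 1 := by
          have := hω' j
          rw [Complex.normSq_eq_norm_sq, this, one_pow]
        rw [this]; simp
      have := hh j
      rw [hinv, mul_inv_eq_one₀ h0] at this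
      exact this
    · rintro rfl
      intro j
      rw [Complex.mul_conj, Complex.normSq_eq_norm_sq, hω j, one_pow, Complex.ofReal_one]
  rw [hfun]
  have := hm_torus_zpowVec habs
  rwa [if_congr hcond rfl rfl] at this

end Helpers

/-- Parseval inequality. If `h : ℤ^d → ℂ^r` is almost periodic,
`ω₁, …, ω_n` are distinct points of `𝕋^d`, `L i = [h, e_{ω_i}]` and `M = [h, h]`,
then `∑ i ‖L i‖² ≤ M`. -/
theorem parseval_inequality {d r n : ℕ}
    (h : (Fin d → ℤ) → Fin r → ℂ) (hap : IsBohrAP h)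
    (ω : Fin n → Fin d → ℂ) (hω : ∀ i, OnTorus (ω i))
    (hdist : Function.Injective ω)
    (L : Fin n → Fin r → ℂ)
    (hL : ∀ i, HasMeanPairing h (eOmega (ω i)) (L i))
    (M : ℝ)
    (hM : HasMean (fun k => ∑ i, h k i * (starRingEnd ℂ) (h k i)) (M : ℂ)) :
    ∑ i, ∑ j, ‖L i j‖ ^ 2 ≤ M := by
  classical
  set e : Fin n → (Fin d → ℤ) → ℂ := fun i k => eOmega (ω i) k with he
  set b : (Fin d → ℤ) → Fin r → ℂ := fun k j => ∑ i, L i j * e i k with hb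
  set S : ℝ := ∑ i, ∑ j, ‖L i j‖ ^ 2 with hS
  set SC : ℂ := ∑ j, ∑ i, (starRingEnd ℂ) (L i j) * L i j with hSC
  have hterm : ∀ i j, (starRingEnd ℂ) (L i j) * L i j
      = ((‖L i j‖ ^ 2 : ℝ) : ℂ) := by
    intro i j
    rw [mul_comm, Complex.mul_conj, Complex.sq_norm]
  have hSCS : SC = (S : ℂ) := by
    rw [hSC, hS]
    simp only [hterm]
    rw [Finset.sum_comm]
    norm_cast
  -- the four mean computations
  have hA : HasMean (fun k => ∑ j, h k j * (starRingEnd ℂ) (h k j)) ((M : ℝ) : ℂ) := hM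
  have hB : HasMean
      (fun k => ∑ j, ∑ i, (starRingEnd ℂ) (L i j) * (h k j * (starRingEnd ℂ) (e i k)))
      SC := by
    rw [hSC]
    exact hm_sum Finset.univ _ _ fun j _ =>
      hm_sum Finset.univ _ _ fun i _ => hm_const_mul _ (hL i j)
  have hC := hm_conj hB
  have hD : HasMean
      (fun k => ∑ j, ∑ i, ∑ i', (L i j * (starRingEnd ℂ) (L i' j)) * (e i k * (starRingEnd ℂ) (e i' k)))
      SC := by
    have hD0 : HasMean
        (fun k => ∑ j, ∑ i, ∑ i', (L i j * (starRingEnd ℂ) (L i' j)) * (e i k * (starRingEnd ℂ) (e i' k)))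
        (∑ j : Fin r, ∑ i : Fin n, ∑ i' : Fin n,
          (L i j * (starRingEnd ℂ) (L i' j)) * (if ω i = ω i' then 1 else 0)) :=
      hm_sum Finset.univ _ _ fun j _ =>
        hm_sum Finset.univ _ _ fun i _ =>
          hm_sum Finset.univ _ _ fun i' _ =>
            hm_const_mul _ (hm_eOmega_pair (hω i) (hω i'))
    have hval : (∑ j : Fin r, ∑ i : Fin n, ∑ i' : Fin n,
        (L i j * (starRingEnd ℂ) (L i' j)) * (if ω i = ω i' then 1 else 0)) = SC := by
      rw [hSC]
      refine Finset.sum_congr rfl fun j _ => Finset.sum_congr rfl fun i _ => ?_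
      simp only [hdist.eq_iff, mul_ite, mul_one, mul_zero]
      rw [Finset.sum_ite_eq Finset.univ i (fun i' => L i j * (starRingEnd ℂ) (L i' j))]
      simp [mul_comm]
    rwa [hval] at hD0
  -- combine
  have hG : HasMean
      (fun k => (∑ j, h k j * (starRingEnd ℂ) (h k j))
        - (∑ j, ∑ i, (starRingEnd ℂ) (L i j) * (h k j * (starRingEnd ℂ) (e i k)))
        - (starRingEnd ℂ) (∑ j, ∑ i, (starRingEnd ℂ) (L i j) * (h k j * (starRingEnd ℂ) (e i k)))
        + (∑ j, ∑ i, ∑ i', (L i j * (starRingEnd ℂ) (L i' j)) * (e i k * (starRingEnd ℂ) (e i' k))))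
      (((M : ℂ) - SC - (starRingEnd ℂ) SC + SC)) :=
    hm_add (hm_sub (hm_sub hA hB) hC) hD
  have hGval : (M : ℂ) - SC - (starRingEnd ℂ) SC + SC = ((M - S : ℝ) : ℂ) := by
    rw [hSCS, Complex.conj_ofReal]
    push_cast
    ring
  rw [hGval] at hG
  -- pointwise identity with the nonnegative function
  have key : ∀ k, (∑ j, (h k j - b k j) * (starRingEnd ℂ) (h k j - b k j))
      = (∑ j, h k j * (starRingEnd ℂ) (h k j))
        - (∑ j, ∑ i, (starRingEnd ℂ) (L i j) * (h k j * (starRingEnd ℂ) (e i k)))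
        - (starRingEnd ℂ) (∑ j, ∑ i, (starRingEnd ℂ) (L i j) * (h k j * (starRingEnd ℂ) (e i k)))
        + (∑ j, ∑ i, ∑ i', (L i j * (starRingEnd ℂ) (L i' j)) * (e i k * (starRingEnd ℂ) (e i' k))) := by
    intro k
    have hconjmid : (starRingEnd ℂ)
        (∑ j, ∑ i, (starRingEnd ℂ) (L i j) * (h k j * (starRingEnd ℂ) (e i k)))
        = ∑ j, ∑ i, L i j * ((starRingEnd ℂ) (h k j) * e i k) := by
      simp [map_sum, map_mul]
    rw [hconjmid]
    rw [← Finset.sum_sub_distrib, ← Finset.sum_sub_distrib, ← Finset.sum_add_distrib]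
    refine Finset.sum_congr rfl fun j _ => ?_
    have hbj : b k j = ∑ i, L i j * e i k := rfl
    have hconjb : (starRingEnd ℂ) (b k j)
        = ∑ i, (starRingEnd ℂ) (L i j) * (starRingEnd ℂ) (e i k) := by
      simp [hbj, map_sum, map_mul]
    have e1 : h k j * (starRingEnd ℂ) (b k j)
        = ∑ i, (starRingEnd ℂ) (L i j) * (h k j * (starRingEnd ℂ) (e i k)) := by
      rw [hconjb, Finset.mul_sum]
      exact Finset.sum_congr rfl fun i _ => by ring
    have e2 : b k j * (starRingEnd ℂ) (h k j)
        = ∑ i, L i j * ((starRingEnd ℂ) (h k j) * e i k) := by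
      rw [hbj, Finset.sum_mul]
      exact Finset.sum_congr rfl fun i _ => by ring
    have e3 : b k j * (starRingEnd ℂ) (b k j)
        = ∑ i, ∑ i', (L i j * (starRingEnd ℂ) (L i' j)) * (e i k * (starRingEnd ℂ) (e i' k)) := by
      rw [hbj, hconjb, Finset.sum_mul_sum]
      exact Finset.sum_congr rfl fun i _ => Finset.sum_congr rfl fun i' _ => by ring
    rw [map_sub]
    calc (h k j - b k j) * ((starRingEnd ℂ) (h k j) - (starRingEnd ℂ) (b k j))
        = h k j * (starRingEnd ℂ) (h k j) - h k j * (starRingEnd ℂ) (b k j)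
          - b k j * (starRingEnd ℂ) (h k j) + b k j * (starRingEnd ℂ) (b k j) := by ring
      _ = _ := by rw [e1, e2, e3]
  have hF : HasMean (fun k => ∑ j, (h k j - b k j) * (starRingEnd ℂ) (h k j - b k j))
      (((M - S : ℝ)) : ℂ) := by
    have : (fun k => ∑ j, (h k j - b k j) * (starRingEnd ℂ) (h k j - b k j))
        = (fun k => (∑ j, h k j * (starRingEnd ℂ) (h k j))
        - (∑ j, ∑ i, (starRingEnd ℂ) (L i j) * (h k j * (starRingEnd ℂ) (e i k)))
        - (starRingEnd ℂ) (∑ j, ∑ i, (starRingEnd ℂ) (L i j) * (h k j * (starRingEnd ℂ) (e i k)))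
        + (∑ j, ∑ i, ∑ i', (L i j * (starRingEnd ℂ) (L i' j)) * (e i k * (starRingEnd ℂ) (e i' k)))) :=
      funext key
    rw [this]
    exact hG
  -- nonnegativity of the averages
  have hre : ∀ N, 0 ≤ (boxAvg (fun k => ∑ j, (h k j - b k j) * (starRingEnd ℂ) (h k j - b k j)) N).re := by
    intro N
    have hrw : boxAvg (fun k => ∑ j, (h k j - b k j) * (starRingEnd ℂ) (h k j - b k j)) N
        = (((((2 * N + 1 : ℕ) : ℝ)) ^ d)⁻¹
            * ∑ k ∈ box d N, ∑ j, Complex.normSq (h k j - b k j) : ℝ) := by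
      simp only [boxAvg, Complex.mul_conj]
      push_cast
      ring
    rw [hrw, Complex.ofReal_re]
    apply mul_nonneg
    · positivity
    · exact Finset.sum_nonneg fun k _ =>
        Finset.sum_nonneg fun j _ => Complex.normSq_nonneg _
  have hlim : Tendsto
      (fun N => (boxAvg (fun k => ∑ j, (h k j - b k j) * (starRingEnd ℂ) (h k j - b k j)) N).re)
      atTop (nhds (M - S)) := by
    have := (Complex.continuous_re.tendsto _).comp hF
    simpa [Function.comp_def] using this
  have hfin : (0 : ℝ) ≤ M - S := ge_of_tendsto' hlim hre
  linarith
end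
end

section
/- Let C be a crystal framework in ℝ^d, let F ⊂ 𝕋^d be finite, and for each ω ∈ F let a_ω : V₀ → ℂ^d be nonzero. If the trigonometric velocity field g = Σ_{ω ∈ F} a_ω ⊗ e_ω (i.e. g(v,k) = Σ_{ω ∈ F} ω^k a_ω(v)) is an infinitesimal flex of C, then each summand a_ω ⊗ e_ω is itself a (nonzero, ω-phase-periodic) infinitesimal flex of C. -/
open Filter

noncomputable section

lemma zpowVec_add {d : ℕ} {z : Fin d → ℂ} (hz : ∀ j, z j ≠ 0) (k l : Fin d → ℤ) :
    zpowVec z (k + l) = zpowVec z k * zpowVec z l := by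
  simp only [zpowVec, Pi.add_apply, ← Finset.prod_mul_distrib]
  exact Finset.prod_congr rfl fun j _ => zpow_add₀ (hz j) _ _

def torusChar {d : ℕ} (z : Fin d → ℂ) (hz : ∀ j, z j ≠ 0) :
    Multiplicative (Fin d → ℤ) →* ℂ where
  toFun k := zpowVec z (Multiplicative.toAdd k)
  map_one' := by simp [zpowVec]
  map_mul' k l := zpowVec_add hz _ _

lemma zpowVec_single {d : ℕ} (z : Fin d → ℂ) (j : Fin d) :
    zpowVec z (Pi.single j 1) = z j := by
  rw [zpowVec, Finset.prod_eq_single j]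
  · simp
  · intro i _ hij; simp [Pi.single_apply, hij]
  · simp

lemma sum_zpow_eq_zero {d : ℕ} (F : Finset (Fin d → ℂ))
    (hF : ∀ ω ∈ F, ∀ j, ω j ≠ 0) (c : (Fin d → ℂ) → ℂ)
    (h : ∀ k : Fin d → ℤ, ∑ ω ∈ F, c ω * zpowVec ω k = 0) :
    ∀ ω ∈ F, c ω = 0 := by
  have li := linearIndependent_monoidHom (Multiplicative (Fin d → ℤ)) ℂ
  set f : {ω // ω ∈ F} → (Multiplicative (Fin d → ℤ) →* ℂ) :=
    fun ω => torusChar ω.1 (hF ω.1 ω.2) with hf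
  have hfinj : Function.Injective f := by
    intro ω ω' hee
    have : ∀ j, ω.1 j = ω'.1 j := by
      intro j
      have := congrArg (fun g => g (Multiplicative.ofAdd (Pi.single j 1))) hee
      simpa [hf, torusChar, zpowVec_single] using this
    exact Subtype.ext (funext this)
  have li2 := li.comp f hfinj
  rw [Fintype.linearIndependent_iff] at li2
  intro ω hω
  have key : ∑ ω : {ω // ω ∈ F}, c ω.1 • (⇑(f ω) : Multiplicative (Fin d → ℤ) → ℂ) = 0 := by
    funext k
    have := h (Multiplicative.toAdd k)
    simpa [hf, torusChar, Finset.sum_attach F (fun ω => c ω * zpowVec ω (Multiplicative.toAdd k))]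
      using this
  exact li2 (fun ω => c ω.1) key ⟨ω, hω⟩

/-- If a trigonometric velocity field `g = ∑_{ω ∈ F} a_ω ⊗ e_ω` with
nonzero coefficients is an infinitesimal flex of `C`, then each summand `a_ω ⊗ e_ω`
is itself a (nonzero, `ω`-phase-periodic) infinitesimal flex of `C`. -/
theorem summand_isFlex_of_trigonometric_isFlex {d : ℕ} (C : CrystalFramework d)
    (F : Finset (Fin d → ℂ)) (hF : ∀ ω ∈ F, OnTorus ω)
    (a : (Fin d → ℂ) → C.V → Fin d → ℂ) (ha : ∀ ω ∈ F, a ω ≠ 0)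
    (hflex : C.IsFlex (fun vk i => ∑ ω ∈ F, zpowVec ω vk.2 * a ω vk.1 i)) :
    ∀ ω ∈ F, C.IsFlex (C.phaseField ω (a ω)) := by
  have hne : ∀ ω ∈ F, ∀ j, ω j ≠ 0 := by
    intro ω hω j h0
    have := hF ω hω j
    rw [h0] at this; simp at this
  intro ω hω e k
  have hl : ∀ k' : Fin d → ℤ, (fun j => (C.fst e).2 j + k' j) = (C.fst e).2 + k' := fun _ => rfl
  have hm : ∀ k' : Fin d → ℤ, (fun j => (C.snd e).2 j + k' j) = (C.snd e).2 + k' := fun _ => rfl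
  set c : (Fin d → ℂ) → ℂ := fun ω =>
    ∑ i, (C.edgeVec e i : ℂ) *
      (zpowVec ω (C.fst e).2 * a ω (C.fst e).1 i -
       zpowVec ω (C.snd e).2 * a ω (C.snd e).1 i) with hc
  have hmain : ∀ k' : Fin d → ℤ, ∑ ω ∈ F, c ω * zpowVec ω k' = 0 := by
    intro k'
    have H := hflex e k'
    calc ∑ ω ∈ F, c ω * zpowVec ω k'
        = ∑ ω ∈ F, ∑ i, (C.edgeVec e i : ℂ) *
            (zpowVec ω ((C.fst e).2 + k') * a ω (C.fst e).1 i -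
             zpowVec ω ((C.snd e).2 + k') * a ω (C.snd e).1 i) := by
          refine Finset.sum_congr rfl fun ω hω => ?_
          rw [hc, Finset.sum_mul]
          refine Finset.sum_congr rfl fun i _ => ?_
          rw [zpowVec_add (hne ω hω), zpowVec_add (hne ω hω)]
          ring
      _ = ∑ i, (C.edgeVec e i : ℂ) *
            ((∑ ω ∈ F, zpowVec ω ((C.fst e).2 + k') * a ω (C.fst e).1 i) -
             (∑ ω ∈ F, zpowVec ω ((C.snd e).2 + k') * a ω (C.snd e).1 i)) := by
          rw [Finset.sum_comm]
          refine Finset.sum_congr rfl fun i _ => ?_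
          rw [mul_sub, Finset.mul_sum, Finset.mul_sum, ← Finset.sum_sub_distrib]
          exact Finset.sum_congr rfl fun ω _ => by ring
      _ = 0 := by rw [← H]; simp only [hl, hm]
  have hc0 := sum_zpow_eq_zero F hne c hmain ω hω
  show ∑ i, (C.edgeVec e i : ℂ) *
      (C.phaseField ω (a ω) ((C.fst e).1, fun j => (C.fst e).2 j + k j) i -
       C.phaseField ω (a ω) ((C.snd e).1, fun j => (C.snd e).2 j + k j) i) = 0
  calc ∑ i, (C.edgeVec e i : ℂ) *
      (C.phaseField ω (a ω) ((C.fst e).1, fun j => (C.fst e).2 j + k j) i -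
       C.phaseField ω (a ω) ((C.snd e).1, fun j => (C.snd e).2 j + k j) i)
      = zpowVec ω k * c ω := by
        rw [hc, Finset.mul_sum]
        refine Finset.sum_congr rfl fun i _ => ?_
        simp only [CrystalFramework.phaseField, hl, hm,
          zpowVec_add (hne ω hω)]
        ring
    _ = 0 := by rw [hc0, mul_zero]
end
end

section
/- Let C be a crystal framework in ℝ^d, let K : ℤ^d → ℂ be a trigonometric sequence, and let u : V₀ × ℤ^d → ℂ^d be an almost periodic infinitesimal flex of C. Then the velocity field g defined by g(v,k) = the v-component of [u, R_k K] (where u is viewed as an almost periodic map ℤ^d → ℂ^{d|V₀|} and [·,·] is the mean pairing) is again an infinitesimal flex of C. -/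
open Filter

noncomputable section

/-- A scalar trigonometric sequence on `ℤ^d`: `K(k) = ∑_{ω ∈ F} c_ω ω^k`. -/
def IsTrigSeqD {d : ℕ} (K : (Fin d → ℤ) → ℂ) : Prop :=
  ∃ F : Finset (Fin d → ℂ), (∀ ω ∈ F, OnTorus ω) ∧
    ∃ c : (Fin d → ℂ) → ℂ, ∀ k, K k = ∑ ω ∈ F, c ω * zpowVec ω k

namespace APAux

variable {d : ℕ}

lemma box_card (d N : ℕ) : (box d N).card = (2*N+1)^d := by
  rw [box, Fintype.card_piFinset]
  have : (Finset.Icc (-(N:ℤ)) N).card = 2*N+1 := by rw [Int.card_Icc]; omega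
  simp [this]

lemma mem_box {N : ℕ} {k : Fin d → ℤ} : k ∈ box d N ↔ ∀ j, -(N:ℤ) ≤ k j ∧ k j ≤ (N:ℤ) := by
  simp [box, Fintype.mem_piFinset]

lemma boxAvg_congr {f g : (Fin d → ℤ) → ℂ} (h : ∀ k, f k = g k) (N : ℕ) :
    boxAvg f N = boxAvg g N := by
  simp only [boxAvg]; congr 1; exact Finset.sum_congr rfl fun k _ => h k

lemma hasMean_congr {f g : (Fin d → ℤ) → ℂ} {L : ℂ} (h : ∀ k, f k = g k) (hf : HasMean f L) :
    HasMean g L := by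
  have : boxAvg f = boxAvg g := funext (boxAvg_congr h)
  rwa [HasMean, ← this]

lemma boxAvg_add (f g : (Fin d → ℤ) → ℂ) (N : ℕ) :
    boxAvg (fun k => f k + g k) N = boxAvg f N + boxAvg g N := by
  simp [boxAvg, Finset.sum_add_distrib, mul_add]

lemma boxAvg_const_mul (a : ℂ) (f : (Fin d → ℤ) → ℂ) (N : ℕ) :
    boxAvg (fun k => a * f k) N = a * boxAvg f N := by
  simp only [boxAvg, Finset.mul_sum]
  refine Finset.sum_congr rfl fun k _ => by ring

lemma hasMean_add {f g : (Fin d → ℤ) → ℂ} {L L' : ℂ} (hf : HasMean f L) (hg : HasMean g L') :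
    HasMean (fun k => f k + g k) (L + L') := by
  have := hf.add hg
  simpa [HasMean, funext (boxAvg_add f g)] using this

lemma hasMean_const_mul {f : (Fin d → ℤ) → ℂ} {L : ℂ} (a : ℂ) (hf : HasMean f L) :
    HasMean (fun k => a * f k) (a * L) := by
  have := hf.const_mul a
  simpa [HasMean, funext (boxAvg_const_mul a f)] using this

lemma hasMean_sum {ι : Type*} (s : Finset ι) (f : ι → (Fin d → ℤ) → ℂ) (L : ι → ℂ)
    (h : ∀ i ∈ s, HasMean (f i) (L i)) :
    HasMean (fun k => ∑ i ∈ s, f i k) (∑ i ∈ s, L i) := by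
  classical
  induction s using Finset.induction_on with
  | empty =>
      have : HasMean (fun _ : Fin d → ℤ => (0:ℂ)) 0 := by
        have : ∀ N, boxAvg (fun _ : Fin d → ℤ => (0:ℂ)) N = 0 := by intro N; simp [boxAvg]
        simpa [HasMean, funext this] using (tendsto_const_nhds : Tendsto (fun _ : ℕ => (0:ℂ)) atTop (nhds 0))
      simpa using this
  | insert a s hx ih =>
      simp only [Finset.sum_insert hx]
      exact hasMean_add (h a (by simp)) (ih fun i hi => h i (by simp [hi]))

lemma hasMean_unique {f : (Fin d → ℤ) → ℂ} {L L' : ℂ} (h : HasMean f L) (h' : HasMean f L') :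
    L = L' := tendsto_nhds_unique h h'

lemma abs_boxAvg_le {f : (Fin d → ℤ) → ℂ} {M : ℝ} {N : ℕ}
    (hM : ∀ k ∈ box d N, ‖f k‖ ≤ M) :
    ‖boxAvg f N‖ ≤ M := by
  have h0box : (0 : Fin d → ℤ) ∈ box d N := by
    simp [box, Fintype.mem_piFinset]
  have hM0 : 0 ≤ M := le_trans (norm_nonneg _) (hM 0 h0box)
  have hcard : ((box d N).card : ℝ) = ((2*N+1)^d : ℕ) := by rw [box_card]
  rw [boxAvg, norm_mul]
  have h1 : ‖(((2 * N + 1 : ℕ) : ℂ) ^ d)⁻¹‖ = (((2*N+1:ℕ):ℝ)^d)⁻¹ := by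
    rw [norm_inv, norm_pow, Complex.norm_natCast]
  have h2 : ‖∑ k ∈ box d N, f k‖ ≤ ((2*N+1:ℕ):ℝ)^d * M := by
    refine le_trans (norm_sum_le _ _) ?_
    calc ∑ k ∈ box d N, ‖f k‖ ≤ ∑ _k ∈ box d N, M :=
          Finset.sum_le_sum fun k hk => hM k hk
      _ = ((box d N).card : ℝ) * M := by rw [Finset.sum_const, nsmul_eq_mul]
      _ = ((2*N+1:ℕ):ℝ)^d * M := by rw [hcard]; push_cast; ring
  rw [h1]
  have hpos : (0:ℝ) < ((2*N+1:ℕ):ℝ)^d := by positivity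
  calc (((2*N+1:ℕ):ℝ)^d)⁻¹ * ‖∑ k ∈ box d N, f k‖
      ≤ (((2*N+1:ℕ):ℝ)^d)⁻¹ * (((2*N+1:ℕ):ℝ)^d * M) := by
        exact mul_le_mul_of_nonneg_left h2 (by positivity)
    _ = M := by field_simp



lemma boxAvg_sub (f g : (Fin d → ℤ) → ℂ) (N : ℕ) :
    boxAvg (fun k => f k - g k) N = boxAvg f N - boxAvg g N := by
  simp only [boxAvg, Finset.sum_sub_distrib, mul_sub]

lemma boxAvg_const (cc : ℂ) (N : ℕ) : boxAvg (fun _ : Fin d → ℤ => cc) N = cc := by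
  rw [boxAvg, Finset.sum_const, box_card, nsmul_eq_mul]
  have hne : ((2 * N + 1 : ℕ) : ℂ) ≠ 0 := Nat.cast_ne_zero.mpr (by omega)
  have hne2 : (((2 * N + 1 : ℕ) : ℂ) ^ d) ≠ 0 := pow_ne_zero _ hne
  push_cast at hne2 ⊢
  field_simp

lemma abs_boxAvg_sub_le {f g : (Fin d → ℤ) → ℂ} {M : ℝ} {N : ℕ}
    (h : ∀ k ∈ box d N, ‖f k - g k‖ ≤ M) :
    ‖boxAvg f N - boxAvg g N‖ ≤ M := by
  rw [← boxAvg_sub]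
  exact abs_boxAvg_le h

lemma prod_bound {ι : Type*} (s : Finset ι) (a : ℝ) (ha : 0 ≤ a) (c : ι → ℝ)
    (h0 : ∀ j ∈ s, 0 ≤ c j) (h1 : ∀ j ∈ s, c j ≤ a) :
    a * (a ^ s.card - ∏ j ∈ s, c j) ≤ (∑ j ∈ s, (a - c j)) * a ^ s.card := by
  classical
  induction s using Finset.induction_on with
  | empty => simp
  | insert x s hx ih =>
      have h0' : ∀ j ∈ s, 0 ≤ c j := fun j hj => h0 j (by simp [hj])
      have h1' : ∀ j ∈ s, c j ≤ a := fun j hj => h1 j (by simp [hj])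
      have IH := ih h0' h1'
      have hcx0 : 0 ≤ c x := h0 x (by simp)
      have hcx1 : c x ≤ a := h1 x (by simp)
      have hprod0 : 0 ≤ ∏ j ∈ s, c j := Finset.prod_nonneg h0'
      have hprodle : ∏ j ∈ s, c j ≤ a ^ s.card := by
        calc ∏ j ∈ s, c j ≤ ∏ _j ∈ s, a := Finset.prod_le_prod h0' h1'
          _ = a ^ s.card := by rw [Finset.prod_const]
      rw [Finset.card_insert_of_notMem hx, Finset.prod_insert hx, Finset.sum_insert hx]
      have key : a * (a ^ (s.card + 1) - c x * ∏ j ∈ s, c j)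
          = a * (a * (a ^ s.card - ∏ j ∈ s, c j)) + (a - c x) * (a * ∏ j ∈ s, c j) := by
        ring
      rw [key]
      have t1 : a * (a * (a ^ s.card - ∏ j ∈ s, c j)) ≤ a * ((∑ j ∈ s, (a - c j)) * a ^ s.card) :=
        mul_le_mul_of_nonneg_left IH ha
      have t2 : (a - c x) * (a * ∏ j ∈ s, c j) ≤ (a - c x) * (a * a ^ s.card) := by
        apply mul_le_mul_of_nonneg_left _ (by linarith)
        exact mul_le_mul_of_nonneg_left hprodle ha
      calc a * (a * (a ^ s.card - ∏ j ∈ s, c j)) + (a - c x) * (a * ∏ j ∈ s, c j)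
          ≤ a * ((∑ j ∈ s, (a - c j)) * a ^ s.card) + (a - c x) * (a * a ^ s.card) := by
            linarith
        _ = ((a - c x) + ∑ j ∈ s, (a - c j)) * a ^ (s.card + 1) := by ring

lemma sum_shift (f : (Fin d → ℤ) → ℂ) (N : ℕ) (t : Fin d → ℤ) :
    ∑ k ∈ box d N, f (k + t) =
    ∑ k ∈ Fintype.piFinset (fun j => Finset.Icc (-(N:ℤ) + t j) ((N:ℤ) + t j)), f k := by
  refine Finset.sum_nbij' (fun k => k + t) (fun k => k - t) ?_ ?_ ?_ ?_ ?_
  · intro k hk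
    simp only [box, Fintype.mem_piFinset, Finset.mem_Icc] at hk ⊢
    intro j; have := hk j; constructor <;> simp [Pi.add_apply] <;> omega
  · intro k hk
    simp only [box, Fintype.mem_piFinset, Finset.mem_Icc] at hk ⊢
    intro j; have := hk j; constructor <;> simp [Pi.sub_apply] <;> omega
  · intro k _; ext j; simp
  · intro k _; ext j; simp
  · intro k _; rfl

lemma inter_card (N : ℕ) (t : Fin d → ℤ) :
    ((box d N ∩ Fintype.piFinset (fun j => Finset.Icc (-(N:ℤ) + t j) ((N:ℤ) + t j))).card : ℝ)
      = ∏ j, ((((min (N:ℤ) ((N:ℤ) + t j) + 1 - max (-(N:ℤ)) (-(N:ℤ) + t j)).toNat : ℕ)) : ℝ) := by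
  have hset : box d N ∩ Fintype.piFinset (fun j => Finset.Icc (-(N:ℤ) + t j) ((N:ℤ) + t j))
      = Fintype.piFinset (fun j => Finset.Icc (-(N:ℤ)) (N:ℤ) ∩ Finset.Icc (-(N:ℤ) + t j) ((N:ℤ) + t j)) := by
    ext k
    simp only [box, Finset.mem_inter, Fintype.mem_piFinset]
    exact ⟨fun ⟨h1, h2⟩ j => ⟨h1 j, h2 j⟩, fun h => ⟨fun j => (h j).1, fun j => (h j).2⟩⟩
  rw [hset, Fintype.card_piFinset]
  push_cast
  refine Finset.prod_congr rfl fun j _ => ?_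
  have : Finset.Icc (-(N:ℤ)) (N:ℤ) ∩ Finset.Icc (-(N:ℤ) + t j) ((N:ℤ) + t j)
      = Finset.Icc (max (-(N:ℤ)) (-(N:ℤ) + t j)) (min (N:ℤ) ((N:ℤ) + t j)) := by
    ext x; simp only [Finset.mem_inter, Finset.mem_Icc, le_max_iff, max_le_iff, le_min_iff,
      min_le_iff]; omega
  rw [this, Int.card_Icc]

/-- Key estimate: shifting the argument changes the box sum by a boundary term. -/
lemma abs_boxAvg_shift_sub {f : (Fin d → ℤ) → ℂ} {M : ℝ} (hM : ∀ k, ‖f k‖ ≤ M)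
    (N : ℕ) (t : Fin d → ℤ) :
    ‖boxAvg (fun k => f (k + t)) N - boxAvg f N‖
      ≤ 2 * M * (∑ j, |(t j : ℝ)|) / (2 * N + 1) := by
  classical
  have hM0 : 0 ≤ M := le_trans (norm_nonneg _) (hM 0)
  set S := box d N with hS
  set T := Fintype.piFinset (fun j => Finset.Icc (-(N:ℤ) + t j) ((N:ℤ) + t j)) with hT
  set a : ℝ := 2 * N + 1 with ha
  have hapos : 0 < a := by positivity
  have hScard : (S.card : ℝ) = a ^ d := by
    rw [hS, box, Fintype.card_piFinset]
    have : (Finset.Icc (-(N:ℤ)) N).card = 2*N+1 := by rw [Int.card_Icc]; omega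
    simp only [this, Finset.prod_const, Finset.card_univ, Fintype.card_fin]
    push_cast; ring
  set c : Fin d → ℝ := fun j =>
    (((min (N:ℤ) ((N:ℤ) + t j) + 1 - max (-(N:ℤ)) (-(N:ℤ) + t j)).toNat : ℕ) : ℝ) with hc
  have hST : ((S ∩ T).card : ℝ) = ∏ j, c j := inter_card N t
  have hc0 : ∀ j, 0 ≤ c j := fun j => Nat.cast_nonneg _
  have hcle : ∀ j, c j ≤ a := by
    intro j
    have h1 : (min (N:ℤ) ((N:ℤ) + t j) + 1 - max (-(N:ℤ)) (-(N:ℤ) + t j)).toNat ≤ 2*N+1 := by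
      rw [Int.toNat_le]; omega
    have h2 : c j ≤ ((2*N+1 : ℕ) : ℝ) := by exact_mod_cast Nat.cast_le.mpr h1
    refine le_trans h2 ?_
    rw [ha]; push_cast; ring_nf; rfl
  have hcge : ∀ j, a - |(t j : ℝ)| ≤ c j := by
    intro j
    have h1 : (2*(N:ℤ)+1 - |t j| : ℤ) ≤ ((min (N:ℤ) ((N:ℤ) + t j) + 1 - max (-(N:ℤ)) (-(N:ℤ) + t j)).toNat : ℤ) := by
      refine le_trans ?_ (Int.self_le_toNat _)
      rcases le_total 0 (t j) with h | h
      · rw [abs_of_nonneg h]; omega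
      · rw [abs_of_nonpos h]; omega
    have h2 : ((2*(N:ℤ)+1 - |t j| : ℤ) : ℝ) ≤ c j := by
      show ((2*(N:ℤ)+1 - |t j| : ℤ) : ℝ) ≤ (((min (N:ℤ) ((N:ℤ) + t j) + 1 - max (-(N:ℤ)) (-(N:ℤ) + t j)).toNat : ℕ) : ℝ)
      exact_mod_cast h1
    refine le_trans (le_of_eq ?_) h2
    rw [ha]; push_cast; ring
  have hprodle : ∏ j, c j ≤ a ^ d := by
    calc ∏ j, c j ≤ ∏ _j : Fin d, a := Finset.prod_le_prod (fun j _ => hc0 j) (fun j _ => hcle j)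
      _ = a ^ d := by simp
  -- the sum difference
  have hsum : ∑ k ∈ S, f (k + t) - ∑ k ∈ S, f k = (∑ k ∈ T \ S, f k) - ∑ k ∈ S \ T, f k := by
    rw [hS, sum_shift f N t, ← hT]
    rw [← Finset.sum_inter_add_sum_sdiff T S f, ← Finset.sum_inter_add_sum_sdiff S T f,
      Finset.inter_comm T S]
    ring
  have habs : ∀ (U : Finset (Fin d → ℤ)), ‖∑ k ∈ U, f k‖ ≤ U.card * M := by
    intro U
    refine le_trans (norm_sum_le _ _) ?_
    calc ∑ k ∈ U, ‖f k‖ ≤ ∑ _k ∈ U, M := Finset.sum_le_sum fun k _ => hM k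
      _ = U.card * M := by rw [Finset.sum_const, nsmul_eq_mul]
  have hTScard : T.card = S.card := by
    have h2 : (T.card : ℝ) = a ^ d := by
      rw [hT, Fintype.card_piFinset]
      have : ∀ j : Fin d, (Finset.Icc (-(N:ℤ) + t j) ((N:ℤ) + t j)).card = 2*N+1 := by
        intro j; rw [Int.card_Icc]; omega
      simp only [this, Finset.prod_const, Finset.card_univ, Fintype.card_fin]
      push_cast; ring
    exact_mod_cast h2.trans hScard.symm
  have hcard1 : ((S \ T).card : ℝ) = a ^ d - ∏ j, c j := by
    have h1 : (S \ T).card + (S ∩ T).card = S.card := Finset.card_sdiff_add_card_inter S T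
    have h2 : ((S \ T).card : ℝ) + ((S ∩ T).card : ℝ) = (S.card : ℝ) := by exact_mod_cast h1
    rw [hST, hScard] at h2; linarith
  have hcard2 : ((T \ S).card : ℝ) = a ^ d - ∏ j, c j := by
    have h1 : (T \ S).card + (T ∩ S).card = T.card := Finset.card_sdiff_add_card_inter T S
    have h2 : ((T \ S).card : ℝ) + ((T ∩ S).card : ℝ) = (T.card : ℝ) := by exact_mod_cast h1
    rw [Finset.inter_comm T S, hST] at h2
    have h3 : (T.card : ℝ) = a ^ d := by exact_mod_cast hTScard ▸ hScard
    rw [h3] at h2; linarith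
  -- assemble
  have key : ‖∑ k ∈ S, f (k + t) - ∑ k ∈ S, f k‖ ≤ 2 * M * (a ^ d - ∏ j, c j) := by
    rw [hsum]
    refine le_trans (norm_sub_le _ _) ?_
    have := habs (T \ S); have := habs (S \ T)
    calc ‖∑ k ∈ T \ S, f k‖ + ‖∑ k ∈ S \ T, f k‖
        ≤ (T \ S).card * M + (S \ T).card * M := by
          exact add_le_add (habs _) (habs _)
      _ = 2 * M * (a ^ d - ∏ j, c j) := by rw [hcard1, hcard2]; ring
  have hbound : a * (a ^ d - ∏ j, c j) ≤ (∑ j, |(t j : ℝ)|) * a ^ d := by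
    have h1 := prod_bound Finset.univ a (le_of_lt hapos) c
      (fun j _ => hc0 j) (fun j _ => hcle j)
    simp only [Finset.card_univ, Fintype.card_fin] at h1
    refine le_trans h1 ?_
    apply mul_le_mul_of_nonneg_right _ (by positivity)
    exact Finset.sum_le_sum fun j _ => by linarith [hcge j]
  -- final computation
  have hb : boxAvg (fun k => f (k + t)) N - boxAvg f N
      = (((2 * N + 1 : ℕ) : ℂ) ^ d)⁻¹ * (∑ k ∈ S, f (k + t) - ∑ k ∈ S, f k) := by
    rw [boxAvg, boxAvg, ← hS, mul_sub]
  rw [hb, norm_mul, norm_inv, norm_pow, Complex.norm_natCast]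
  have hcast : ((2 * N + 1 : ℕ) : ℝ) = a := by rw [ha]; push_cast; ring
  rw [hcast]
  have hadpos : (0:ℝ) < a ^ d := pow_pos hapos d
  have hgoal : 2 * M * (∑ j, |(t j : ℝ)|) / (2 * (N:ℝ) + 1) = 2 * M * (∑ j, |(t j : ℝ)|) / a := by
    rw [ha]
  rw [hgoal, le_div_iff₀ hapos]
  have step1 : ‖∑ k ∈ S, f (k + t) - ∑ k ∈ S, f k‖ * (a ^ d)⁻¹ * a
      ≤ 2 * M * (a ^ d - ∏ j, c j) * (a ^ d)⁻¹ * a := by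
    apply mul_le_mul_of_nonneg_right _ hapos.le
    exact mul_le_mul_of_nonneg_right key (inv_nonneg.mpr hadpos.le)
  have h6 := mul_le_mul_of_nonneg_left hbound
    (mul_nonneg (by linarith : (0:ℝ) ≤ 2*M) (inv_nonneg.mpr hadpos.le))
  calc (a ^ d)⁻¹ * ‖∑ k ∈ S, f (k + t) - ∑ k ∈ S, f k‖ * a
      = ‖∑ k ∈ S, f (k + t) - ∑ k ∈ S, f k‖ * (a ^ d)⁻¹ * a := by ring
    _ ≤ 2 * M * (a ^ d - ∏ j, c j) * (a ^ d)⁻¹ * a := step1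
    _ = 2 * M * (a ^ d)⁻¹ * (a * (a ^ d - ∏ j, c j)) := by ring
    _ ≤ 2 * M * (a ^ d)⁻¹ * ((∑ j, |(t j : ℝ)|) * a ^ d) := h6
    _ = 2 * M * (∑ j, |(t j : ℝ)|) := by field_simp


/-- The key double-average estimate. -/
lemma est {f : (Fin d → ℤ) → ℂ} {M : ℝ} (hM : ∀ k, ‖f k‖ ≤ M)
    {ε R : ℝ} (hR : 0 < R)
    (hper : ∀ c : Fin d → ℝ, ∃ l : Fin d → ℤ, (∀ j, |(l j : ℝ) - c j| ≤ R) ∧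
      ∀ k, ‖f (k - l) - f k‖ ≤ ε) (N N' : ℕ) :
    ‖boxAvg f N - boxAvg f N'‖ ≤
      ε + 2 * M * (d * R) / (2 * N + 1) + 2 * M * (d * N) / (2 * N' + 1) := by
  classical
  have hM0 : 0 ≤ M := le_trans (norm_nonneg _) (hM 0)
  set G : (Fin d → ℤ) → ℂ := fun m => boxAvg (fun k => f (k + m)) N with hG
  set D : ℂ := boxAvg G N' with hD
  -- step (ii): each G m is close to boxAvg f N
  have step2 : ∀ m : Fin d → ℤ,
      ‖G m - boxAvg f N‖ ≤ ε + 2 * M * (d * R) / (2 * N + 1) := by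
    intro m
    obtain ⟨l, hl, hfl⟩ := hper (fun j => (m j : ℝ))
    set t : Fin d → ℤ := m - l with ht
    have e1 : ‖G m - boxAvg (fun k => f (k + t)) N‖ ≤ ε := by
      apply abs_boxAvg_sub_le
      intro k _
      have : f (k + m) - f (k + t) = -(f ((k + m) - l) - f (k + m)) := by
        have : k + t = (k + m) - l := by rw [ht]; ring
        rw [this]; ring
      rw [this, norm_neg]
      exact hfl (k + m)
    have e2 : ‖boxAvg (fun k => f (k + t)) N - boxAvg f N‖
        ≤ 2 * M * (d * R) / (2 * N + 1) := by
      refine le_trans (abs_boxAvg_shift_sub hM N t) ?_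
      have hsum : ∑ j, |(t j : ℝ)| ≤ d * R := by
        have h1 : ∀ j : Fin d, |(t j : ℝ)| ≤ R := by
          intro j
          have : (t j : ℝ) = (m j : ℝ) - (l j : ℝ) := by rw [ht]; push_cast; simp
          rw [this, abs_sub_comm]
          exact hl j
        calc ∑ j, |(t j : ℝ)| ≤ ∑ _j : Fin d, R := Finset.sum_le_sum fun j _ => h1 j
          _ = d * R := by simp [mul_comm]
      gcongr
    calc ‖G m - boxAvg f N‖
        = ‖(G m - boxAvg (fun k => f (k + t)) N) +
            (boxAvg (fun k => f (k + t)) N - boxAvg f N)‖ := by congr 1; ring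
      _ ≤ _ := norm_add_le _ _
      _ ≤ ε + 2 * M * (d * R) / (2 * N + 1) := add_le_add e1 e2
  have stepD1 : ‖D - boxAvg f N‖ ≤ ε + 2 * M * (d * R) / (2 * N + 1) := by
    have heq : D - boxAvg f N = boxAvg (fun m => G m - boxAvg f N) N' := by
      rw [boxAvg_sub, hD, boxAvg_const]
    rw [heq]
    exact abs_boxAvg_le (fun m _ => step2 m)
  set cN : ℂ := (((2 * N + 1 : ℕ) : ℂ) ^ d)⁻¹ with hcN
  set cN' : ℂ := (((2 * N' + 1 : ℕ) : ℂ) ^ d)⁻¹ with hcN'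
  have hswap : D = boxAvg (fun k => boxAvg (fun m => f (m + k)) N') N := by
    have l1 : D = cN' * (cN * ∑ m ∈ box d N', ∑ k ∈ box d N, f (k + m)) := by
      rw [hD, boxAvg, hG]
      simp only [boxAvg, ← hcN, ← hcN']
      rw [← Finset.mul_sum]
    have l2 : boxAvg (fun k => boxAvg (fun m => f (m + k)) N') N
        = cN * (cN' * ∑ k ∈ box d N, ∑ m ∈ box d N', f (m + k)) := by
      rw [boxAvg]
      simp only [boxAvg, ← hcN, ← hcN']
      rw [← Finset.mul_sum]
    rw [l1, l2]
    have l3 : ∑ m ∈ box d N', ∑ k ∈ box d N, f (k + m)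
        = ∑ k ∈ box d N, ∑ m ∈ box d N', f (m + k) := by
      rw [Finset.sum_comm]
      exact Finset.sum_congr rfl fun k _ => Finset.sum_congr rfl fun m _ => by rw [add_comm]
    rw [l3]; ring
  have step1' : ∀ k ∈ box d N,
      ‖boxAvg (fun m => f (m + k)) N' - boxAvg f N'‖ ≤ 2 * M * (d * N) / (2 * N' + 1) := by
    intro k hk
    refine le_trans (abs_boxAvg_shift_sub hM N' k) ?_
    have h1 : ∀ j : Fin d, |(k j : ℝ)| ≤ (N : ℝ) := by
      intro j
      have := mem_box.mp hk j
      rw [abs_le]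
      constructor <;> [exact_mod_cast this.1; exact_mod_cast this.2]
    have hsum : ∑ j, |(k j : ℝ)| ≤ (d : ℝ) * N := by
      calc ∑ j, |(k j : ℝ)| ≤ ∑ _j : Fin d, (N : ℝ) := Finset.sum_le_sum fun j _ => h1 j
        _ = (d : ℝ) * N := by simp [mul_comm]
    gcongr
  have stepD2 : ‖D - boxAvg f N'‖ ≤ 2 * M * (d * N) / (2 * N' + 1) := by
    rw [hswap]
    have heq : boxAvg (fun k => boxAvg (fun m => f (m + k)) N') N - boxAvg f N'
        = boxAvg (fun k => boxAvg (fun m => f (m + k)) N' - boxAvg f N') N := by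
      rw [boxAvg_sub, boxAvg_const]
    rw [heq]
    exact abs_boxAvg_le step1'
  calc ‖boxAvg f N - boxAvg f N'‖
      = ‖(boxAvg f N - D) + (D - boxAvg f N')‖ := by congr 1; ring
    _ ≤ ‖boxAvg f N - D‖ + ‖D - boxAvg f N'‖ := norm_add_le _ _
    _ = ‖D - boxAvg f N‖ + ‖D - boxAvg f N'‖ := by rw [norm_sub_rev]
    _ ≤ (ε + 2 * M * (d * R) / (2 * N + 1)) + 2 * M * (d * N) / (2 * N' + 1) :=
        add_le_add stepD1 stepD2
    _ = ε + 2 * M * (d * R) / (2 * N + 1) + 2 * M * (d * N) / (2 * N' + 1) := by ring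

/-- Existence of the mean for a Bohr-type almost periodic scalar sequence. -/
lemma exists_mean {f : (Fin d → ℤ) → ℂ} {M : ℝ} (hM : ∀ k, ‖f k‖ ≤ M)
    (hper : ∀ ε > (0:ℝ), ∃ R > (0:ℝ), ∀ c : Fin d → ℝ, ∃ l : Fin d → ℤ,
      (∀ j, |(l j : ℝ) - c j| ≤ R) ∧ ∀ k, ‖f (k - l) - f k‖ ≤ ε) :
    ∃ L, HasMean f L := by
  have hM0 : 0 ≤ M := le_trans (norm_nonneg _) (hM 0)
  have hC : CauchySeq (boxAvg f) := by
    rw [Metric.cauchySeq_iff]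
    intro ε₀ hε₀
    obtain ⟨R, hR, hper'⟩ := hper (ε₀/8) (by positivity)
    obtain ⟨N₀, hN₀⟩ := exists_nat_ge (16 * M * (d * R) / ε₀)
    have hbnd1 : ∀ N : ℕ, N₀ ≤ N → 2 * M * (d * R) / (2 * N + 1) ≤ ε₀ / 8 := by
      intro N hN
      rw [div_le_iff₀ (by positivity)]
      have h1 : (16 : ℝ) * M * (d * R) / ε₀ ≤ N := le_trans hN₀ (by exact_mod_cast hN)
      rw [div_le_iff₀ hε₀] at h1
      have : (N : ℝ) * ε₀ ≤ (2 * N + 1) * ε₀ := by nlinarith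
      nlinarith
    refine ⟨N₀, fun m hm n hn => ?_⟩
    obtain ⟨N'', hN''⟩ := exists_nat_ge (16 * M * (d * (max m n)) / ε₀)
    have hbnd2 : ∀ q : ℕ, q ≤ max m n → 2 * M * (d * q) / (2 * N'' + 1) ≤ ε₀ / 8 := by
      intro q hq
      rw [div_le_iff₀ (by positivity)]
      have h1 : (16 : ℝ) * M * (d * (max m n)) / ε₀ ≤ N'' := hN''
      rw [div_le_iff₀ hε₀] at h1
      have hq' : (q : ℝ) ≤ (max m n : ℕ) := by exact_mod_cast hq
      have hd0 : (0:ℝ) ≤ (d:ℝ) := Nat.cast_nonneg d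
      have : 2 * M * ((d:ℝ) * q) ≤ 2 * M * ((d:ℝ) * (max m n : ℕ)) := by
        apply mul_le_mul_of_nonneg_left _ (by linarith)
        exact mul_le_mul_of_nonneg_left hq' hd0
      nlinarith [mul_nonneg (mul_nonneg hM0 hd0) (Nat.cast_nonneg (max m n))]
    have key : ∀ q : ℕ, N₀ ≤ q → q ≤ max m n →
        ‖boxAvg f q - boxAvg f N''‖ ≤ 3 * (ε₀ / 8) := by
      intro q hq1 hq2
      refine le_trans (est hM hR hper' q N'') ?_
      have b1 := hbnd1 q hq1
      have b2 := hbnd2 q hq2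
      linarith
    have h1 := key m hm (le_max_left _ _)
    have h2 := key n hn (le_max_right _ _)
    rw [Complex.dist_eq]
    calc ‖boxAvg f m - boxAvg f n‖
        = ‖(boxAvg f m - boxAvg f N'') - (boxAvg f n - boxAvg f N'')‖ := by
          congr 1; ring
      _ ≤ _ := norm_sub_le _ _
      _ ≤ 3 * (ε₀ / 8) + 3 * (ε₀ / 8) := add_le_add h1 h2
      _ < ε₀ := by linarith
  obtain ⟨L, hL⟩ := cauchySeq_tendsto_of_complete hC
  exact ⟨L, hL⟩

lemma hasMean_shift {f : (Fin d → ℤ) → ℂ} {M : ℝ} {L : ℂ} (hM : ∀ k, ‖f k‖ ≤ M)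
    (t : Fin d → ℤ) (hf : HasMean f L) : HasMean (fun k => f (k + t)) L := by
  have hb : Tendsto (fun N : ℕ => 2 * M * (∑ j, |(t j : ℝ)|) / (2 * N + 1)) atTop (nhds 0) := by
    have h1 : Tendsto (fun N : ℕ => (2 * (N:ℝ) + 1)) atTop atTop := by
      apply Filter.tendsto_atTop_add_const_right
      exact Tendsto.const_mul_atTop two_pos tendsto_natCast_atTop_atTop
    have h2 : Tendsto (fun N : ℕ => (2 * (N:ℝ) + 1)⁻¹) atTop (nhds 0) :=
      h1.inv_tendsto_atTop
    have h3 := h2.const_mul (2 * M * (∑ j, |(t j : ℝ)|))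
    simpa [div_eq_mul_inv] using h3
  have hdiff : Tendsto (fun N => boxAvg (fun k => f (k + t)) N - boxAvg f N) atTop (nhds 0) := by
    apply squeeze_zero_norm _ hb
    intro N
    exact abs_boxAvg_shift_sub hM N t
  have := hf.add hdiff
  rw [add_zero] at this
  have heq : (fun N => boxAvg f N + (boxAvg (fun k => f (k + t)) N - boxAvg f N))
      = boxAvg (fun k => f (k + t)) := by
    funext N; ring
  rwa [HasMean, ← heq]

lemma onTorus_ne_zero {z : Fin d → ℂ} (hz : OnTorus z) (j : Fin d) : z j ≠ 0 := by
  intro h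
  have := hz j
  rw [h] at this
  simp at this

lemma zpowVec_add {z : Fin d → ℂ} (hz : ∀ j, z j ≠ 0) (k l : Fin d → ℤ) :
    zpowVec z (k + l) = zpowVec z k * zpowVec z l := by
  rw [zpowVec, zpowVec, zpowVec, ← Finset.prod_mul_distrib]
  exact Finset.prod_congr rfl fun j _ => by rw [Pi.add_apply, zpow_add₀ (hz j)]

lemma zpowVec_sub {z : Fin d → ℂ} (hz : ∀ j, z j ≠ 0) (k l : Fin d → ℤ) :
    zpowVec z (k - l) = zpowVec z k / zpowVec z l := by
  rw [zpowVec, zpowVec, zpowVec, ← Finset.prod_div_distrib]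
  exact Finset.prod_congr rfl fun j _ => by rw [Pi.sub_apply, zpow_sub₀ (hz j)]

lemma zpowVec_ne_zero {z : Fin d → ℂ} (hz : ∀ j, z j ≠ 0) (k : Fin d → ℤ) :
    zpowVec z k ≠ 0 :=
  Finset.prod_ne_zero_iff.mpr fun j _ => zpow_ne_zero _ (hz j)

lemma abs_zpowVec {z : Fin d → ℂ} (hz : OnTorus z) (k : Fin d → ℤ) :
    ‖zpowVec z k‖ = 1 := by
  rw [zpowVec, norm_prod]
  refine Finset.prod_eq_one fun j _ => ?_
  rw [norm_zpow, hz j, one_zpow]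

lemma conj_zpowVec (z : Fin d → ℂ) (k : Fin d → ℤ) :
    (starRingEnd ℂ) (zpowVec z k) = zpowVec (fun j => (starRingEnd ℂ) (z j)) k := by
  rw [zpowVec, zpowVec, map_prod]
  exact Finset.prod_congr rfl fun j _ => by rw [map_zpow₀]

lemma coord_le_sqrt (x : Fin d → ℝ) (j : Fin d) : |x j| ≤ Real.sqrt (∑ j', x j' ^ 2) := by
  rw [← Real.sqrt_sq_eq_abs (x j)]
  apply Real.sqrt_le_sqrt
  exact Finset.single_le_sum (f := fun j' => x j' ^ 2) (fun j' _ => sq_nonneg _) (Finset.mem_univ j)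

lemma common_periods {ι : Type} [Fintype ι] (h : (Fin d → ℤ) → ι → ℂ)
    (hap2 : ∀ ε > (0:ℝ), ∃ R > (0:ℝ), ∀ c : Fin d → ℝ, ∃ l : Fin d → ℤ,
      Real.sqrt (∑ j, ((l j : ℝ) - c j) ^ 2) ≤ R ∧
      ∀ k i, ‖h (fun j => k j - l j) i - h k i‖ < ε)
    (F : Finset (Fin d → ℂ)) (hF : ∀ ω ∈ F, OnTorus ω) :
    ∀ ε > (0:ℝ), ∃ R > (0:ℝ), ∀ c : Fin d → ℝ, ∃ l : Fin d → ℤ,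
      (∀ j, |(l j : ℝ) - c j| ≤ R) ∧
      (∀ k i, ‖h (fun j => k j - l j) i - h k i‖ ≤ ε) ∧
      ∀ ω ∈ F, ‖zpowVec ω l - 1‖ ≤ ε := by
  classical
  intro ε hε
  obtain ⟨R, hR, hl⟩ := hap2 (ε/2) (by positivity)
  set P : (Fin d → ℤ) → Prop :=
    fun l => ∀ k i, ‖h (fun j => k j - l j) i - h k i‖ < ε/2 with hP
  set φ : (Fin d → ℤ) → ({ω // ω ∈ F} → ℂ) := fun l ω => zpowVec ω.1 l with hφdef
  have hφ : ∀ l, φ l ∈ Metric.closedBall (0 : {ω // ω ∈ F} → ℂ) 1 := by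
    intro l
    rw [Metric.mem_closedBall, dist_pi_le_iff zero_le_one]
    intro ω
    rw [Pi.zero_apply, dist_zero_right]
    rw [hφdef]
    exact le_of_eq (abs_zpowVec (hF ω.1 ω.2) l)
  have htb : TotallyBounded (Metric.closedBall (0 : {ω // ω ∈ F} → ℂ) 1) :=
    (isCompact_closedBall _ _).totallyBounded
  obtain ⟨t, htfin, hcov⟩ := Metric.totallyBounded_iff.mp htb (ε/4) (by positivity)
  set hit : ({ω // ω ∈ F} → ℂ) → Prop := fun y => ∃ l, P l ∧ φ l ∈ Metric.ball y (ε/4) with hhitdef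
  set rep : ({ω // ω ∈ F} → ℂ) → (Fin d → ℤ) :=
    fun y => if hy : hit y then hy.choose else 0 with hrepdef
  have hrep : ∀ y, hit y → P (rep y) ∧ φ (rep y) ∈ Metric.ball y (ε/4) := by
    intro y hy
    simp only [hrepdef, dif_pos hy]
    exact hy.choose_spec
  set B : ℝ := ∑ y ∈ htfin.toFinset, ∑ j, |((rep y) j : ℝ)| with hBdef
  have hB0 : 0 ≤ B := Finset.sum_nonneg fun y _ => Finset.sum_nonneg fun j _ => abs_nonneg _
  have hBy : ∀ y ∈ htfin.toFinset, ∀ j, |((rep y) j : ℝ)| ≤ B := by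
    intro y hy j
    calc |((rep y) j : ℝ)| ≤ ∑ j', |((rep y) j' : ℝ)| :=
          Finset.single_le_sum (f := fun j' => |((rep y) j' : ℝ)|)
            (fun j' _ => abs_nonneg _) (Finset.mem_univ j)
      _ ≤ B := Finset.single_le_sum (f := fun y' => ∑ j', |((rep y') j' : ℝ)|)
          (fun y' _ => Finset.sum_nonneg fun j' _ => abs_nonneg _) hy
  refine ⟨R + B, by linarith, fun c => ?_⟩
  obtain ⟨l, hld, hlp⟩ := hl c
  have hPl : P l := hlp
  have hmem : φ l ∈ ⋃ y ∈ t, Metric.ball y (ε/4) := hcov (hφ l)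
  obtain ⟨y, hyt, hy⟩ := Set.mem_iUnion₂.mp hmem
  have hhit : hit y := ⟨l, hPl, hy⟩
  obtain ⟨hPl', hφl'⟩ := hrep y hhit
  set l' := rep y with hl'def
  refine ⟨l - l', ?_, ?_, ?_⟩
  · intro j
    have h1 : |(l j : ℝ) - c j| ≤ R :=
      le_trans (coord_le_sqrt (fun j' => (l j' : ℝ) - c j') j) hld
    have h2 : |((l' j : ℤ) : ℝ)| ≤ B := hBy y (htfin.mem_toFinset.mpr hyt) j
    have : (((l - l') j : ℤ) : ℝ) - c j = ((l j : ℝ) - c j) - (l' j : ℝ) := by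
      rw [Pi.sub_apply]; push_cast; ring
    rw [this]
    calc |((l j : ℝ) - c j) - (l' j : ℝ)| ≤ |(l j : ℝ) - c j| + |(l' j : ℝ)| := abs_sub _ _
      _ ≤ R + B := add_le_add h1 h2
  · intro k i
    have e1 : (fun j => k j - (l - l') j) = (fun j => (k j + l' j) - l j) := by
      funext j; rw [Pi.sub_apply]; ring
    have a1 := hlp (fun j => k j + l' j) i
    have a2 := hPl' (fun j => k j + l' j) i
    have e2 : (fun j => (k j + l' j) - l' j) = k := by funext j; ring
    rw [e2] at a2
    rw [e1]
    calc ‖h (fun j => (k j + l' j) - l j) i - h k i‖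
        = ‖(h (fun j => (k j + l' j) - l j) i - h (fun j => k j + l' j) i)
            + (h (fun j => k j + l' j) i - h k i)‖ := by congr 1; ring
      _ ≤ _ := norm_add_le _ _
      _ ≤ ε := by
          have a2' : ‖h (fun j => k j + l' j) i - h k i‖ < ε/2 := by
            rw [← norm_neg]
            simpa using a2
          linarith [a1, a2']
  · intro ω hω
    have hωt : OnTorus ω := hF ω hω
    have hne : ∀ j, ω j ≠ 0 := onTorus_ne_zero hωt
    rw [zpowVec_sub hne]
    have hB1 : ‖zpowVec ω l'‖ = 1 := abs_zpowVec hωt l'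
    have h0 : zpowVec ω l' ≠ 0 := zpowVec_ne_zero hne l'
    have key : zpowVec ω l / zpowVec ω l' - 1 = (zpowVec ω l - zpowVec ω l') / zpowVec ω l' := by
      rw [sub_div, div_self h0]
    rw [key, norm_div, hB1, div_one]
    have hd1 : dist (φ l ⟨ω, hω⟩) (φ l' ⟨ω, hω⟩) ≤ dist (φ l) (φ l') := dist_le_pi_dist _ _ _
    have hd2 : dist (φ l) (φ l') ≤ dist (φ l) y + dist y (φ l') := dist_triangle _ _ _
    have hd3 : dist (φ l) y < ε/4 := Metric.mem_ball.mp hy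
    have hd4 : dist y (φ l') < ε/4 := by
      rw [dist_comm]; exact Metric.mem_ball.mp hφl'
    have : dist (φ l ⟨ω, hω⟩) (φ l' ⟨ω, hω⟩) = ‖zpowVec ω l - zpowVec ω l'‖ := by
      rw [Complex.dist_eq]
    linarith [this ▸ hd1]

end APAux

/-- For a trigonometric sequence `K` and an almost periodic
infinitesimal flex `u` of `C`, the mean convolution `g(v,k) = [u, R_k K]` is
well defined and again an infinitesimal flex of `C`. -/
theorem meanConvolution_isFlex {d : ℕ} (C : CrystalFramework d)
    (K : (Fin d → ℤ) → ℂ) (hK : IsTrigSeqD K)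
    (u : C.V × (Fin d → ℤ) → Fin d → ℂ)
    (hu : C.IsFlex u)
    (hap : IsBohrAP (fun k (vi : C.V × Fin d) => u (vi.1, k) vi.2)) :
    (∃ g : C.V × (Fin d → ℤ) → Fin d → ℂ,
      ∀ (v : C.V) (k : Fin d → ℤ) (i : Fin d),
        HasMean (fun j => u (v, j) i * (starRingEnd ℂ) (K (fun t => j t - k t)))
          (g (v, k) i)) ∧
    ∀ g : C.V × (Fin d → ℤ) → Fin d → ℂ,
      (∀ (v : C.V) (k : Fin d → ℤ) (i : Fin d),
        HasMean (fun j => u (v, j) i * (starRingEnd ℂ) (K (fun t => j t - k t)))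
          (g (v, k) i)) →
      C.IsFlex g := by
  classical
  obtain ⟨F, hFtor, c, hKdef⟩ := hK
  obtain ⟨⟨M, hMb⟩, hap2⟩ := hap
  set M₀ : ℝ := max M 0 with hM₀def
  have hM₀0 : 0 ≤ M₀ := le_max_right _ _
  have hMb' : ∀ (k : Fin d → ℤ) (v : C.V) (i : Fin d), ‖u (v, k) i‖ ≤ M₀ :=
    fun k v i => le_trans (hMb k (v, i)) (le_max_left _ _)
  set cnj : (Fin d → ℂ) → (Fin d → ℂ) := fun ω j => (starRingEnd ℂ) (ω j) with hcnjdef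
  have hcnjt : ∀ ω ∈ F, OnTorus (cnj ω) := by
    intro ω hω j
    rw [hcnjdef]
    simpa [Complex.norm_conj] using hFtor ω hω j
  have hcnj0 : ∀ ω ∈ F, ∀ j, cnj ω j ≠ 0 := fun ω hω => APAux.onTorus_ne_zero (hcnjt ω hω)
  have hCP := APAux.common_periods (fun k (vi : C.V × Fin d) => u (vi.1, k) vi.2) hap2 F hFtor
  -- existence of the elementary means
  have hex : ∀ (v : C.V) (i : Fin d) (ω : Fin d → ℂ), ∃ L, ω ∈ F →
      HasMean (fun k => u (v, k) i * zpowVec (cnj ω) k) L := by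
    intro v i ω
    by_cases hω : ω ∈ F
    · have hωt := hcnjt ω hω
      have hωne := hcnj0 ω hω
      have hbound : ∀ k, ‖u (v, k) i * zpowVec (cnj ω) k‖ ≤ M₀ := by
        intro k
        rw [norm_mul, APAux.abs_zpowVec hωt, mul_one]
        exact hMb' k v i
      have hper : ∀ ε > (0:ℝ), ∃ R > (0:ℝ), ∀ cc : Fin d → ℝ, ∃ l : Fin d → ℤ,
          (∀ j, |(l j : ℝ) - cc j| ≤ R) ∧
          ∀ k, ‖(fun k => u (v, k) i * zpowVec (cnj ω) k) (k - l)
            - (fun k => u (v, k) i * zpowVec (cnj ω) k) k‖ ≤ ε := by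
        intro ε hε
        have h1M : (0:ℝ) < 1 + M₀ := by linarith
        obtain ⟨R, hR, hcl⟩ := hCP (ε / (1 + M₀)) (by positivity)
        refine ⟨R, hR, fun cc => ?_⟩
        obtain ⟨l, hl1, hl2, hl3⟩ := hcl cc
        refine ⟨l, hl1, fun k => ?_⟩
        have hzabs1 : ‖zpowVec (cnj ω) (k - l)‖ = 1 := APAux.abs_zpowVec hωt _
        have hdecomp : u (v, k - l) i * zpowVec (cnj ω) (k - l) - u (v, k) i * zpowVec (cnj ω) k
            = (u (v, k - l) i - u (v, k) i) * zpowVec (cnj ω) (k - l)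
              + u (v, k) i * (zpowVec (cnj ω) (k - l) - zpowVec (cnj ω) k) := by ring
        have e1 : ‖(u (v, k - l) i - u (v, k) i) * zpowVec (cnj ω) (k - l)‖
            ≤ ε / (1 + M₀) := by
          rw [norm_mul, hzabs1, mul_one]
          exact hl2 k (v, i)
        have e2 : ‖u (v, k) i * (zpowVec (cnj ω) (k - l) - zpowVec (cnj ω) k)‖
            ≤ M₀ * (ε / (1 + M₀)) := by
          rw [norm_mul]
          have hz : ‖zpowVec (cnj ω) (k - l) - zpowVec (cnj ω) k‖
              ≤ ε / (1 + M₀) := by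
            have hzl : zpowVec (cnj ω) l ≠ 0 := APAux.zpowVec_ne_zero hωne l
            have : zpowVec (cnj ω) (k - l) - zpowVec (cnj ω) k
                = zpowVec (cnj ω) k * (1 - zpowVec (cnj ω) l) / zpowVec (cnj ω) l := by
              rw [APAux.zpowVec_sub hωne]
              rw [mul_sub, mul_one, sub_div, mul_div_assoc, div_self hzl, mul_one]
            rw [this, norm_div, norm_mul, APAux.abs_zpowVec hωt k, one_mul,
              APAux.abs_zpowVec hωt l, div_one]
            have : (1 : ℂ) - zpowVec (cnj ω) l = -((starRingEnd ℂ) (zpowVec ω l - 1)) := by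
              rw [map_sub, APAux.conj_zpowVec, map_one]
              show (1 : ℂ) - zpowVec (cnj ω) l = -(zpowVec (cnj ω) l - 1)
              ring
            rw [this, norm_neg, Complex.norm_conj]
            exact hl3 ω hω
          exact mul_le_mul (hMb' k v i) hz (norm_nonneg _) hM₀0
        calc ‖(fun k => u (v, k) i * zpowVec (cnj ω) k) (k - l)
              - (fun k => u (v, k) i * zpowVec (cnj ω) k) k‖
            = ‖(u (v, k - l) i - u (v, k) i) * zpowVec (cnj ω) (k - l)
              + u (v, k) i * (zpowVec (cnj ω) (k - l) - zpowVec (cnj ω) k)‖ := by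
              rw [← hdecomp]
          _ ≤ _ := norm_add_le _ _
          _ ≤ ε / (1 + M₀) + M₀ * (ε / (1 + M₀)) := add_le_add e1 e2
          _ = ε := by
              have hne : (1 + M₀) ≠ 0 := ne_of_gt h1M
              field_simp
      obtain ⟨L, hL⟩ := APAux.exists_mean hbound hper
      exact ⟨L, fun _ => hL⟩
    · exact ⟨0, fun h => absurd h hω⟩
  choose m hm using hex
  -- the explicit limit
  have htarget : ∀ (v : C.V) (k : Fin d → ℤ) (i : Fin d),
      HasMean (fun j => u (v, j) i * (starRingEnd ℂ) (K (fun t => j t - k t)))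
        (∑ ω ∈ F, (starRingEnd ℂ) (c ω) / zpowVec (cnj ω) k * m v i ω) := by
    intro v k i
    have hmean : HasMean (fun j => ∑ ω ∈ F,
        ((starRingEnd ℂ) (c ω) / zpowVec (cnj ω) k) * (u (v, j) i * zpowVec (cnj ω) j))
        (∑ ω ∈ F, (starRingEnd ℂ) (c ω) / zpowVec (cnj ω) k * m v i ω) :=
      APAux.hasMean_sum F _ _ fun ω hω =>
        APAux.hasMean_const_mul _ (hm v i ω hω)
    refine APAux.hasMean_congr (fun j => ?_) hmean
    rw [hKdef, map_sum, Finset.mul_sum]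
    refine Finset.sum_congr rfl fun ω hω => ?_
    rw [map_mul, APAux.conj_zpowVec]
    have hsub : (fun t => j t - k t) = j - k := rfl
    rw [hsub, APAux.zpowVec_sub (hcnj0 ω hω)]
    have hk0 : zpowVec (cnj ω) k ≠ 0 := APAux.zpowVec_ne_zero (hcnj0 ω hω) k
    field_simp
  constructor
  · exact ⟨fun vk i => ∑ ω ∈ F, (starRingEnd ℂ) (c ω) / zpowVec (cnj ω) vk.2 * m vk.1 i ω,
      fun v k i => htarget v k i⟩
  · intro g hg e k
    set fv := (C.fst e).1 with hfv
    set fl := (C.fst e).2 with hfl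
    set sv := (C.snd e).1 with hsv
    set sl := (C.snd e).2 with hsl
    have hgf : ∀ i, g (fv, fun j => fl j + k j) i
        = ∑ ω ∈ F, (starRingEnd ℂ) (c ω) / zpowVec (cnj ω) (fun j => fl j + k j) * m fv i ω :=
      fun i => APAux.hasMean_unique (hg fv _ i) (htarget fv _ i)
    have hgs : ∀ i, g (sv, fun j => sl j + k j) i
        = ∑ ω ∈ F, (starRingEnd ℂ) (c ω) / zpowVec (cnj ω) (fun j => sl j + k j) * m sv i ω :=
      fun i => APAux.hasMean_unique (hg sv _ i) (htarget sv _ i)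
    -- the key per-frequency identity
    have hkey : ∀ ω ∈ F, (∑ i, (C.edgeVec e i : ℂ) * m fv i ω) * zpowVec (cnj ω) sl
        = (∑ i, (C.edgeVec e i : ℂ) * m sv i ω) * zpowVec (cnj ω) fl := by
      intro ω hω
      have hne := hcnj0 ω hω
      have hzt := hcnjt ω hω
      have hzfl : zpowVec (cnj ω) fl ≠ 0 := APAux.zpowVec_ne_zero hne fl
      have hzsl : zpowVec (cnj ω) sl ≠ 0 := APAux.zpowVec_ne_zero hne sl
      have hWA : HasMean (fun j => ∑ i, (C.edgeVec e i : ℂ) * (u (fv, j) i * zpowVec (cnj ω) j))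
          (∑ i, (C.edgeVec e i : ℂ) * m fv i ω) :=
        APAux.hasMean_sum Finset.univ _ _ fun i _ =>
          APAux.hasMean_const_mul _ (hm fv i ω hω)
      have hWB : HasMean (fun j => ∑ i, (C.edgeVec e i : ℂ) * (u (sv, j) i * zpowVec (cnj ω) j))
          (∑ i, (C.edgeVec e i : ℂ) * m sv i ω) :=
        APAux.hasMean_sum Finset.univ _ _ fun i _ =>
          APAux.hasMean_const_mul _ (hm sv i ω hω)
      have hWbound : ∀ j, 
          ‖∑ i, (C.edgeVec e i : ℂ) * (u (sv, j) i * zpowVec (cnj ω) j)‖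
          ≤ ∑ i, ‖(C.edgeVec e i : ℂ)‖ * M₀ := by
        intro j
        refine le_trans (norm_sum_le _ _) (Finset.sum_le_sum fun i _ => ?_)
        rw [norm_mul, norm_mul, APAux.abs_zpowVec hzt, mul_one]
        exact mul_le_mul_of_nonneg_left (hMb' j sv i) (norm_nonneg _)
      have hWshift : HasMean
          (fun j => ∑ i, (C.edgeVec e i : ℂ) * (u (sv, j + (sl - fl)) i * zpowVec (cnj ω) (j + (sl - fl))))
          (∑ i, (C.edgeVec e i : ℂ) * m sv i ω) :=
        APAux.hasMean_shift hWbound (sl - fl) hWB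
      have hγ : HasMean
          (fun j => (zpowVec (cnj ω) fl / zpowVec (cnj ω) sl) *
            ∑ i, (C.edgeVec e i : ℂ) * (u (sv, j + (sl - fl)) i * zpowVec (cnj ω) (j + (sl - fl))))
          ((zpowVec (cnj ω) fl / zpowVec (cnj ω) sl) * ∑ i, (C.edgeVec e i : ℂ) * m sv i ω) :=
        APAux.hasMean_const_mul _ hWshift
      have hcongr : ∀ j, (zpowVec (cnj ω) fl / zpowVec (cnj ω) sl) *
            (∑ i, (C.edgeVec e i : ℂ) * (u (sv, j + (sl - fl)) i * zpowVec (cnj ω) (j + (sl - fl))))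
          = ∑ i, (C.edgeVec e i : ℂ) * (u (fv, j) i * zpowVec (cnj ω) j) := by
        intro j
        have hflex := hu e (fun jj => j jj - fl jj)
        rw [← hfv, ← hfl, ← hsv, ← hsl] at hflex
        have e1 : (fun jj => fl jj + (j jj - fl jj)) = j := funext fun jj => by ring
        have e2 : (fun jj => sl jj + (j jj - fl jj)) = j + (sl - fl) := funext fun jj => by
          show sl jj + (j jj - fl jj) = j jj + (sl jj - fl jj)
          ring
        rw [e1, e2] at hflex
        have hPQ : ∑ i, (C.edgeVec e i : ℂ) * u (fv, j) i
            = ∑ i, (C.edgeVec e i : ℂ) * u (sv, j + (sl - fl)) i := by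
          rw [← sub_eq_zero, ← Finset.sum_sub_distrib]
          rw [← hflex]
          exact Finset.sum_congr rfl fun i _ => by ring
        have hzjt : zpowVec (cnj ω) (j + (sl - fl))
            = zpowVec (cnj ω) j * (zpowVec (cnj ω) sl / zpowVec (cnj ω) fl) := by
          rw [APAux.zpowVec_add hne, APAux.zpowVec_sub hne]
        calc (zpowVec (cnj ω) fl / zpowVec (cnj ω) sl) *
              (∑ i, (C.edgeVec e i : ℂ) * (u (sv, j + (sl - fl)) i * zpowVec (cnj ω) (j + (sl - fl))))
            = (∑ i, (C.edgeVec e i : ℂ) * u (sv, j + (sl - fl)) i) *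
              ((zpowVec (cnj ω) fl / zpowVec (cnj ω) sl) * zpowVec (cnj ω) (j + (sl - fl))) := by
              rw [Finset.mul_sum, Finset.sum_mul]
              exact Finset.sum_congr rfl fun i _ => by ring
          _ = (∑ i, (C.edgeVec e i : ℂ) * u (sv, j + (sl - fl)) i) * zpowVec (cnj ω) j := by
              congr 1
              rw [hzjt]
              field_simp
          _ = (∑ i, (C.edgeVec e i : ℂ) * u (fv, j) i) * zpowVec (cnj ω) j := by rw [← hPQ]
          _ = ∑ i, (C.edgeVec e i : ℂ) * (u (fv, j) i * zpowVec (cnj ω) j) := by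
              rw [Finset.sum_mul]
              exact Finset.sum_congr rfl fun i _ => by ring
      have hA' : HasMean (fun j => ∑ i, (C.edgeVec e i : ℂ) * (u (fv, j) i * zpowVec (cnj ω) j))
          ((zpowVec (cnj ω) fl / zpowVec (cnj ω) sl) * ∑ i, (C.edgeVec e i : ℂ) * m sv i ω) :=
        APAux.hasMean_congr hcongr hγ
      have hAB : (∑ i, (C.edgeVec e i : ℂ) * m fv i ω)
          = (zpowVec (cnj ω) fl / zpowVec (cnj ω) sl) * ∑ i, (C.edgeVec e i : ℂ) * m sv i ω :=
        APAux.hasMean_unique hWA hA'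
      rw [hAB]
      field_simp
    -- assemble
    calc ∑ i, (C.edgeVec e i : ℂ) *
          (g (fv, fun j => fl j + k j) i - g (sv, fun j => sl j + k j) i)
        = ∑ i, ∑ ω ∈ F,
            ((C.edgeVec e i : ℂ) * ((starRingEnd ℂ) (c ω) / zpowVec (cnj ω) (fun j => fl j + k j) * m fv i ω)
            - (C.edgeVec e i : ℂ) * ((starRingEnd ℂ) (c ω) / zpowVec (cnj ω) (fun j => sl j + k j) * m sv i ω)) := by
          refine Finset.sum_congr rfl fun i _ => ?_
          rw [hgf i, hgs i, ← Finset.sum_sub_distrib, Finset.mul_sum]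
          exact Finset.sum_congr rfl fun ω _ => by ring
      _ = ∑ ω ∈ F, ∑ i,
            ((C.edgeVec e i : ℂ) * ((starRingEnd ℂ) (c ω) / zpowVec (cnj ω) (fun j => fl j + k j) * m fv i ω)
            - (C.edgeVec e i : ℂ) * ((starRingEnd ℂ) (c ω) / zpowVec (cnj ω) (fun j => sl j + k j) * m sv i ω)) :=
          Finset.sum_comm
      _ = ∑ _ω ∈ F, (0:ℂ) := by
          refine Finset.sum_congr rfl fun ω hω => ?_
          have hne := hcnj0 ω hω
          have hzfl : zpowVec (cnj ω) fl ≠ 0 := APAux.zpowVec_ne_zero hne fl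
          have hzsl : zpowVec (cnj ω) sl ≠ 0 := APAux.zpowVec_ne_zero hne sl
          have hzk : zpowVec (cnj ω) k ≠ 0 := APAux.zpowVec_ne_zero hne k
          have h1 : zpowVec (cnj ω) (fun j => fl j + k j) = zpowVec (cnj ω) fl * zpowVec (cnj ω) k := by
            have : (fun j => fl j + k j) = fl + k := rfl
            rw [this, APAux.zpowVec_add hne]
          have h2 : zpowVec (cnj ω) (fun j => sl j + k j) = zpowVec (cnj ω) sl * zpowVec (cnj ω) k := by
            have : (fun j => sl j + k j) = sl + k := rfl
            rw [this, APAux.zpowVec_add hne]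
          rw [Finset.sum_sub_distrib]
          have h3 : ∑ i, (C.edgeVec e i : ℂ) *
              ((starRingEnd ℂ) (c ω) / zpowVec (cnj ω) (fun j => fl j + k j) * m fv i ω)
              = (starRingEnd ℂ) (c ω) / (zpowVec (cnj ω) fl * zpowVec (cnj ω) k) *
                ∑ i, (C.edgeVec e i : ℂ) * m fv i ω := by
            rw [Finset.mul_sum, h1]
            exact Finset.sum_congr rfl fun i _ => by ring
          have h4 : ∑ i, (C.edgeVec e i : ℂ) *
              ((starRingEnd ℂ) (c ω) / zpowVec (cnj ω) (fun j => sl j + k j) * m sv i ω)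
              = (starRingEnd ℂ) (c ω) / (zpowVec (cnj ω) sl * zpowVec (cnj ω) k) *
                ∑ i, (C.edgeVec e i : ℂ) * m sv i ω := by
            rw [Finset.mul_sum, h2]
            exact Finset.sum_congr rfl fun i _ => by ring
          rw [h3, h4, sub_eq_zero]
          rw [div_mul_eq_mul_div, div_mul_eq_mul_div, div_eq_div_iff (by
            exact mul_ne_zero hzfl hzk) (by exact mul_ne_zero hzsl hzk)]
          have hkk := hkey ω hω
          linear_combination (starRingEnd ℂ) (c ω) * zpowVec (cnj ω) k * hkk
      _ = 0 := Finset.sum_const_zero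
end
end
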